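/- arXiv:2304.13485 — 6 statements merged into one kernel-verified Lean document; each statement's English description precedes it below -/
import Mathlib

section
/- Let F = {f_1,...,f_k} be a family of polynomials in K[x_1,...,x_n] with degree of regularity d_reg(F) = d < ∞ and deg(f_i) ≤ d for all i. Then for each monomial m of degree d there exists a polynomial p in V_{F,d} (the smallest K-linear subspace containing all elements of F of degree ≤ d and closed under multiplication by monomials as long as the degree stays ≤ d) such that the top homogeneous component of p equals m. -/
open MvPolynomial

noncomputable section

/-- The total degree of a monomial exponent vector. -/
def mdeg {n : ℕ} (s : Fin n →₀ ℕ) : ℕ := s.sum fun _ e => e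

/-- The top homogeneous component (homogeneous part of largest degree) of a polynomial. -/
def topPart {n : ℕ} {K : Type*} [CommSemiring K] (f : MvPolynomial (Fin n) K) :
    MvPolynomial (Fin n) K :=
  homogeneousComponent f.totalDegree f

/-- `regAt F d` says that the degree-`d` part of the ideal generated by the top homogeneous
parts of the elements of `F` is all of `K[x₁,…,xₙ]_d`; the degree of regularity of `F` is the
least such `d`. -/
def regAt {n : ℕ} {K : Type*} [Field K] (F : Finset (MvPolynomial (Fin n) K)) (d : ℕ) : Prop :=
  ∀ p : MvPolynomial (Fin n) K, p.IsHomogeneous d →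
    p ∈ Ideal.span (topPart '' (F : Set (MvPolynomial (Fin n) K)))

/-- `V F d` : the smallest `K`-linear subspace containing all elements of `F` of total degree
at most `d`, and closed under multiplication by monomials as long as the degree stays `≤ d`. -/
def V {n : ℕ} {K : Type*} [Field K] (F : Finset (MvPolynomial (Fin n) K)) (d : ℕ) :
    Submodule K (MvPolynomial (Fin n) K) :=
  sInf {W | (∀ f ∈ F, f.totalDegree ≤ d → f ∈ W) ∧
    ∀ (s : Fin n →₀ ℕ), ∀ f ∈ W,
      (monomial s (1 : K) * f).totalDegree ≤ d → monomial s (1 : K) * f ∈ W}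

/-- Projection of a product with a homogeneous polynomial. -/
lemma hc_mul {n : ℕ} {K : Type*} [Field K] {g : MvPolynomial (Fin n) K} {k d : ℕ}
    (hg : g.IsHomogeneous k) (hk : k ≤ d) (c : MvPolynomial (Fin n) K) :
    homogeneousComponent d (c * g) = homogeneousComponent (d - k) c * g := by
  conv_lhs => rw [← sum_homogeneousComponent c]
  rw [Finset.sum_mul, map_sum]
  have key : ∀ j : ℕ, homogeneousComponent d (homogeneousComponent j c * g)
      = if j = d - k then homogeneousComponent j c * g else 0 := by
    intro j
    have h1 : (homogeneousComponent j c * g).IsHomogeneous (j + k) :=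
      (homogeneousComponent_isHomogeneous j c).mul hg
    rw [homogeneousComponent_of_mem ((mem_homogeneousSubmodule _ _).2 h1)]
    have : (d = j + k) ↔ (j = d - k) := by omega
    simp [this]
  rw [Finset.sum_congr rfl fun j _ => key j, Finset.sum_ite_eq' (Finset.range (c.totalDegree + 1))]
  split_ifs with h
  · rfl
  · have : c.totalDegree < d - k := by
      simp only [Finset.mem_range] at h; omega
    rw [homogeneousComponent_eq_zero _ _ this, zero_mul]

/-- Lemma 3.1: if `d_reg(F) = d < ∞` and all elements of `F` have degree `≤ d`, then for each
monomial of degree `d` there is `p ∈ V_{F,d}` whose top homogeneous part is that monomial. -/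
theorem stmt0 {n : ℕ} {K : Type*} [Field K] (F : Finset (MvPolynomial (Fin n) K)) (d : ℕ)
    (hdeg : ∀ f ∈ F, f.totalDegree ≤ d)
    (hreg : IsLeast {e | regAt F e} d) :
    ∀ s : Fin n →₀ ℕ, mdeg s = d → ∃ p ∈ V F d, topPart p = monomial s (1 : K) := by
  intro s hs
  have hsdeg : s.degree = d := by
    rw [← hs]; rfl
  have hm : (monomial s (1 : K)) ∈ Ideal.span (topPart '' (F : Set (MvPolynomial (Fin n) K))) :=
    hreg.1 _ (isHomogeneous_monomial 1 hsdeg)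
  rw [Ideal.span, Submodule.mem_span_set] at hm
  obtain ⟨c, hsupp, hsum⟩ := hm
  have H : ∀ g ∈ c.support, ∃ x, x ∈ F ∧ topPart x = g := by
    intro g hg
    exact hsupp hg
  choose! f hfF hft using H
  set p : MvPolynomial (Fin n) K :=
    ∑ g ∈ c.support, homogeneousComponent (d - (f g).totalDegree) (c g) * f g with hp
  -- the homogeneous degree-d component of p is the monomial
  have hcd : homogeneousComponent d p = monomial s (1 : K) := by
    have h1 : ∀ g ∈ c.support,
        homogeneousComponent d (homogeneousComponent (d - (f g).totalDegree) (c g) * f g)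
          = homogeneousComponent (d - (f g).totalDegree) (c g) * g := by
      intro g hg
      have hk : (f g).totalDegree ≤ d := hdeg _ (hfF g hg)
      have hq : (homogeneousComponent (d - (f g).totalDegree) (c g)).IsHomogeneous
          (d - (f g).totalDegree) := homogeneousComponent_isHomogeneous _ _
      rw [mul_comm, hc_mul hq (Nat.sub_le _ _) (f g)]
      have h4 : d - (d - (f g).totalDegree) = (f g).totalDegree := by omega
      have h5 : homogeneousComponent (f g).totalDegree (f g) = g := hft g hg
      rw [h4, mul_comm, h5]
    have h2 : ∀ g ∈ c.support,
        homogeneousComponent d (c g * g)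
          = homogeneousComponent (d - (f g).totalDegree) (c g) * g := by
      intro g hg
      have hk : (f g).totalDegree ≤ d := hdeg _ (hfF g hg)
      have hgh : g.IsHomogeneous (f g).totalDegree := by
        have h5 : homogeneousComponent (f g).totalDegree (f g) = g := hft g hg
        have h6 := homogeneousComponent_isHomogeneous (f g).totalDegree (f g)
        rw [h5] at h6
        exact h6
      rw [hc_mul hgh hk (c g)]
    have h3 : homogeneousComponent d (monomial s (1 : K)) = monomial s (1 : K) := by
      rw [homogeneousComponent_of_mem
        ((mem_homogeneousSubmodule _ _).2 (isHomogeneous_monomial (1 : K) hsdeg))]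
      simp
    calc homogeneousComponent d p
        = ∑ g ∈ c.support,
            homogeneousComponent d
              (homogeneousComponent (d - (f g).totalDegree) (c g) * f g) := by
          rw [hp, map_sum]
      _ = ∑ g ∈ c.support, homogeneousComponent (d - (f g).totalDegree) (c g) * g :=
          Finset.sum_congr rfl h1
      _ = ∑ g ∈ c.support, homogeneousComponent d (c g * g) :=
          (Finset.sum_congr rfl h2).symm
      _ = homogeneousComponent d (∑ g ∈ c.support, c g * g) := (map_sum _ _ _).symm
      _ = monomial s (1 : K) := by
          rw [show (∑ g ∈ c.support, c g * g) = monomial s (1:K) from ?_, h3]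
          rw [← hsum, Finsupp.sum]
          exact Finset.sum_congr rfl fun g _ => (smul_eq_mul _ _).symm
  refine ⟨p, ?_, ?_⟩
  · -- p ∈ V F d
    rw [V, Submodule.mem_sInf]
    rintro W ⟨hW1, hW2⟩
    apply Submodule.sum_mem
    intro g hg
    have hfW : f g ∈ W := hW1 _ (hfF g hg) (hdeg _ (hfF g hg))
    set q := homogeneousComponent (d - (f g).totalDegree) (c g) with hq
    have hrw : q * f g = ∑ t ∈ q.support, coeff t q • (monomial t (1 : K) * f g) := by
      conv_lhs => rw [q.as_sum]
      rw [Finset.sum_mul]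
      refine Finset.sum_congr rfl fun t ht => ?_
      rw [← smul_mul_assoc, smul_monomial, smul_eq_mul, mul_one]
    rw [hrw]
    apply Submodule.sum_mem
    intro t ht
    apply Submodule.smul_mem
    apply hW2 _ _ hfW
    have htd : t.degree = d - (f g).totalDegree := by
      rw [mem_support_iff, hq, coeff_homogeneousComponent] at ht
      by_contra hne
      simp [hne] at ht
    have h1 : (monomial t (1 : K) * f g).totalDegree
        ≤ (monomial t (1 : K)).totalDegree + (f g).totalDegree := totalDegree_mul _ _
    have h2 : (monomial t (1 : K) : MvPolynomial (Fin n) K).totalDegree = t.degree := by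
      rw [totalDegree_monomial _ (one_ne_zero)]; rfl
    have h3 : (f g).totalDegree ≤ d := hdeg _ (hfF g hg)
    omega
  · -- topPart p = monomial s 1
    have hle : p.totalDegree ≤ d := by
      rw [hp]
      apply totalDegree_finsetSum_le
      intro g hg
      have h1 := totalDegree_mul (homogeneousComponent (d - (f g).totalDegree) (c g)) (f g)
      have h2 : (homogeneousComponent (d - (f g).totalDegree) (c g)).totalDegree
          ≤ d - (f g).totalDegree :=
        (homogeneousComponent_isHomogeneous _ _).totalDegree_le
      have h3 : (f g).totalDegree ≤ d := hdeg _ (hfF g hg)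
      omega
    have hne : p.totalDegree = d := by
      rcases lt_or_eq_of_le hle with h | h
      · exfalso
        rw [homogeneousComponent_eq_zero _ _ h] at hcd
        exact one_ne_zero ((monomial_eq_zero).1 hcd.symm)
      · exact h
    rw [topPart, hne, hcd]
end
end

section
/- Let F be a family of polynomials with d_reg(F) = d < ∞ and all generators of degree ≤ d. If m is a monic monomial and f ∈ V_{F,d+1} with deg(f) ≤ d, then the product mf admits a representation mf = Σ m_i a_i g_i where each g_i ∈ V_{F,d+1}, each m_i a monic monomial, a_i ∈ K, and deg(m_i g_i) ≤ deg(mf) for all i, with exactly one term having m_i = 1 and all other g_i having top parts that are monomials of degree d. -/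
open MvPolynomial

noncomputable section

section AuxLemmas

variable {n : ℕ} {K : Type*} [Field K]

lemma mdeg_eq_degree (s : Fin n →₀ ℕ) : mdeg s = s.degree := rfl

lemma mdeg_add (a b : Fin n →₀ ℕ) : mdeg (a + b) = mdeg a + mdeg b := by
  unfold mdeg
  exact Finsupp.sum_add_index' (fun _ => rfl) (fun _ _ _ => rfl)

lemma mdeg_single (j : Fin n) (k : ℕ) : mdeg (Finsupp.single j k) = k := by
  unfold mdeg
  exact Finsupp.sum_single_index rfl

lemma mdeg_eq_zero {s : Fin n →₀ ℕ} : mdeg s = 0 ↔ s = 0 := by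
  rw [mdeg_eq_degree]; exact Finsupp.degree_eq_zero_iff s

lemma totalDegree_monomial_one (s : Fin n →₀ ℕ) :
    (monomial s (1 : K)).totalDegree = mdeg s :=
  totalDegree_monomial s one_ne_zero

lemma totalDegree_monomial_mul_le (s : Fin n →₀ ℕ) (c : K) (p : MvPolynomial (Fin n) K) :
    (monomial s c * p).totalDegree ≤ mdeg s + p.totalDegree :=
  le_trans (totalDegree_mul _ _) (add_le_add (totalDegree_monomial_le s c) le_rfl)

lemma exists_top_coeff {p : MvPolynomial (Fin n) K} (hp : p ≠ 0) :
    ∃ u ∈ p.support, mdeg u = p.totalDegree := by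
  obtain ⟨u, hu, hu2⟩ := Finset.exists_mem_eq_sup p.support
    (MvPolynomial.support_nonempty.2 hp) (fun s => s.sum fun _ e => e)
  exact ⟨u, hu, hu2.symm⟩

lemma totalDegree_monomial_one_mul (s : Fin n →₀ ℕ) {p : MvPolynomial (Fin n) K} (hp : p ≠ 0) :
    (monomial s (1 : K) * p).totalDegree = mdeg s + p.totalDegree := by
  refine le_antisymm (totalDegree_monomial_mul_le s 1 p) ?_
  obtain ⟨u, hu, hud⟩ := exists_top_coeff hp
  have h : coeff (s + u) (monomial s (1 : K) * p) = coeff u p := by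
    rw [coeff_monomial_mul, one_mul]
  have : s + u ∈ (monomial s (1 : K) * p).support := by
    rw [mem_support_iff, h]; exact mem_support_iff.1 hu
  have := le_totalDegree this
  rw [show ((s + u).sum fun _ e => e) = mdeg (s + u) from rfl, mdeg_add, hud] at this
  exact this


lemma hc_monomial_one_mul (D : ℕ) (s : Fin n →₀ ℕ) (p : MvPolynomial (Fin n) K) :
    homogeneousComponent D (monomial s (1 : K) * p) =
      if mdeg s ≤ D then monomial s (1 : K) * homogeneousComponent (D - mdeg s) p else 0 := by
  ext u
  rw [coeff_homogeneousComponent]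
  by_cases hs : mdeg s ≤ D
  · rw [if_pos hs, coeff_monomial_mul', coeff_monomial_mul']
    by_cases hle : s ≤ u
    · rw [if_pos hle, if_pos hle, coeff_homogeneousComponent]
      have hu : mdeg (u - s) + mdeg s = mdeg u := by
        rw [← mdeg_add, tsub_add_cancel_of_le hle]
      have hiff : (u.degree = D) ↔ ((u - s).degree = D - mdeg s) := by
        rw [← mdeg_eq_degree, ← mdeg_eq_degree]
        omega
      by_cases hD : u.degree = D
      · rw [if_pos hD, if_pos (hiff.1 hD)]
      · rw [if_neg hD, if_neg (fun h => hD (hiff.2 h)), mul_zero]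
    · rw [if_neg hle, if_neg hle]
      split <;> rfl
  · rw [if_neg hs, coeff_zero]
    by_cases hD : u.degree = D
    · rw [if_pos hD, coeff_monomial_mul']
      by_cases hle : s ≤ u
      · exfalso
        have : mdeg s ≤ mdeg u := by
          rw [← tsub_add_cancel_of_le hle, mdeg_add]; omega
        rw [mdeg_eq_degree, mdeg_eq_degree] at this
        rw [mdeg_eq_degree] at hs
        omega
      · rw [if_neg hle]
    · rw [if_neg hD]

lemma topPart_ne_zero {p : MvPolynomial (Fin n) K} (hp : p ≠ 0) : topPart p ≠ 0 := by
  obtain ⟨u, hu, hud⟩ := exists_top_coeff hp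
  intro h
  have := congrArg (coeff u) h
  rw [topPart, coeff_homogeneousComponent, coeff_zero, ← mdeg_eq_degree, if_pos hud] at this
  exact mem_support_iff.1 hu this

lemma totalDegree_le_of_hc_eq_zero {p : MvPolynomial (Fin n) K} {D : ℕ}
    (h1 : p.totalDegree ≤ D + 1) (h2 : homogeneousComponent (D + 1) p = 0) :
    p.totalDegree ≤ D := by
  by_cases hp : p = 0
  · simp [hp]
  · by_contra h
    have hd : p.totalDegree = D + 1 := by omega
    have := topPart_ne_zero hp
    rw [topPart, hd] at this
    exact this h2

lemma topPart_of_hc {q : MvPolynomial (Fin n) K} {D : ℕ} {w : Fin n →₀ ℕ}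
    (h1 : q.totalDegree ≤ D) (h2 : homogeneousComponent D q = monomial w (1 : K)) :
    topPart q = monomial w (1 : K) ∧ q.totalDegree = D := by
  have hne : monomial w (1 : K) ≠ 0 := fun h => one_ne_zero (monomial_eq_zero.1 h)
  have hD : q.totalDegree = D := by
    refine le_antisymm h1 ?_
    by_contra h
    have hlt : q.totalDegree < D := by omega
    exact hne (h2.symm.trans (homogeneousComponent_eq_zero D q hlt))
  rw [topPart, hD, h2]
  exact ⟨rfl, rfl⟩

-- V lemmas
lemma mem_V_of_mem_F {F : Finset (MvPolynomial (Fin n) K)} {e : ℕ}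
    {f : MvPolynomial (Fin n) K} (hf : f ∈ F) (hd : f.totalDegree ≤ e) : f ∈ V F e := by
  rw [V, Submodule.mem_sInf]
  exact fun W hW => hW.1 f hf hd

lemma V_mul_monomial {F : Finset (MvPolynomial (Fin n) K)} {e : ℕ}
    {p : MvPolynomial (Fin n) K} (hp : p ∈ V F e) (s : Fin n →₀ ℕ)
    (hd : (monomial s (1 : K) * p).totalDegree ≤ e) : monomial s (1 : K) * p ∈ V F e := by
  rw [V, Submodule.mem_sInf] at hp ⊢
  exact fun W hW => hW.2 s p (hp W hW) hd

lemma totalDegree_le_of_mem_V {F : Finset (MvPolynomial (Fin n) K)} {e : ℕ}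
    {p : MvPolynomial (Fin n) K} (hp : p ∈ V F e) : p.totalDegree ≤ e := by
  rw [V, Submodule.mem_sInf] at hp
  have := hp (restrictTotalDegree (Fin n) K e)
    ⟨fun f _ hd => (mem_restrictTotalDegree _ e f).2 hd,
     fun s f _ hd => (mem_restrictTotalDegree _ e _).2 hd⟩
  exact (mem_restrictTotalDegree _ e p).1 this

lemma V_mul_monomial' {F : Finset (MvPolynomial (Fin n) K)} {e : ℕ}
    {p : MvPolynomial (Fin n) K} (hp : p ∈ V F e) (s : Fin n →₀ ℕ) (c : K)
    (hd : (monomial s (1 : K) * p).totalDegree ≤ e) : monomial s c * p ∈ V F e := by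
  have : monomial s c * p = c • (monomial s (1 : K) * p) := by
    rw [← smul_mul_assoc, smul_monomial, smul_eq_mul, mul_one]
  rw [this]
  exact Submodule.smul_mem _ c (V_mul_monomial hp s hd)

lemma monomial_mul_eq_smul (s : Fin n →₀ ℕ) (c : K) (p : MvPolynomial (Fin n) K) :
    monomial s c * p = c • (monomial s (1 : K) * p) := by
  rw [← smul_mul_assoc, smul_monomial, smul_eq_mul, mul_one]

lemma lemA {F : Finset (MvPolynomial (Fin n) K)} {e : ℕ}
    (he : ∀ f ∈ F, f.totalDegree ≤ e) {p : MvPolynomial (Fin n) K}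
    (hp : p ∈ Ideal.span (topPart '' (F : Set (MvPolynomial (Fin n) K)))) :
    ∀ D, D ≤ e → ∃ q ∈ V F e, q.totalDegree ≤ D ∧
      homogeneousComponent D q = homogeneousComponent D p := by
  induction hp using Submodule.span_induction with
  | mem x hx =>
    obtain ⟨f, hfF, rfl⟩ := hx
    intro D hD
    by_cases hf0 : f = 0
    · exact ⟨0, Submodule.zero_mem _, by simp, by simp [hf0, topPart]⟩
    · have htop : topPart f ∈ homogeneousSubmodule (Fin n) K f.totalDegree :=
        homogeneousComponent_mem _ _
      by_cases hfD : D = f.totalDegree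
      · refine ⟨f, mem_V_of_mem_F hfF (he f hfF), le_of_eq hfD.symm, ?_⟩
        rw [homogeneousComponent_of_mem htop, if_pos hfD, topPart, hfD]
      · refine ⟨0, Submodule.zero_mem _, by simp, ?_⟩
        rw [homogeneousComponent_of_mem htop, if_neg hfD, map_zero]
  | zero => exact fun D _ => ⟨0, Submodule.zero_mem _, by simp, by simp⟩
  | add x y hx hy ihx ihy =>
    intro D hD
    obtain ⟨qx, hqxV, hqxd, hqxc⟩ := ihx D hD
    obtain ⟨qy, hqyV, hqyd, hqyc⟩ := ihy D hD
    exact ⟨qx + qy, Submodule.add_mem _ hqxV hqyV,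
      (totalDegree_add qx qy).trans (max_le hqxd hqyd),
      by rw [map_add, map_add, hqxc, hqyc]⟩
  | smul c x hx ih =>
    intro D hD
    choose Q hQV hQd hQc using ih
    refine ⟨∑ u ∈ c.support, if h : mdeg u ≤ D then
        (coeff u c) • (monomial u (1 : K) * Q (D - mdeg u) (le_trans (Nat.sub_le D _) hD))
        else 0, ?_, ?_, ?_⟩
    · refine Submodule.sum_mem _ fun u _ => ?_
      split
      · refine Submodule.smul_mem _ _ (V_mul_monomial (hQV _ _) u ?_)
        refine (totalDegree_monomial_mul_le u 1 _).trans ?_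
        have := hQd (D - mdeg u) (le_trans (Nat.sub_le D _) hD)
        omega
      · exact Submodule.zero_mem _
    · refine (totalDegree_finset_sum _ _).trans (Finset.sup_le fun u _ => ?_)
      split
      · refine (totalDegree_smul_le _ _).trans ((totalDegree_monomial_mul_le u 1 _).trans ?_)
        have := hQd (D - mdeg u) (le_trans (Nat.sub_le D _) hD)
        omega
      · simp
    · have hcx : (c • x : MvPolynomial (Fin n) K) = ∑ u ∈ c.support, monomial u (coeff u c) * x := by
        rw [smul_eq_mul, ← Finset.sum_mul, support_sum_monomial_coeff]
      rw [hcx, map_sum, map_sum]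
      refine Finset.sum_congr rfl fun u _ => ?_
      rw [monomial_mul_eq_smul u (coeff u c) x]
      by_cases h : mdeg u ≤ D
      · rw [dif_pos h, map_smul, map_smul, hc_monomial_one_mul, hc_monomial_one_mul,
          if_pos h, if_pos h, hQc]
      · rw [dif_neg h, map_zero, map_smul, hc_monomial_one_mul, if_neg h, smul_zero]

lemma lemBmon {F : Finset (MvPolynomial (Fin n) K)} {d : ℕ}
    (hdeg : ∀ f ∈ F, f.totalDegree ≤ d) (hreg : regAt F d)
    {w : Fin n →₀ ℕ} (hw : mdeg w = d) :
    ∃ q ∈ V F (d + 1), q.totalDegree ≤ d ∧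
      homogeneousComponent d q = monomial w (1 : K) := by
  have hhom : (monomial w (1 : K)).IsHomogeneous d :=
    isHomogeneous_monomial 1 (by rw [← mdeg_eq_degree]; exact hw)
  obtain ⟨q, hqV, hqd, hqc⟩ := lemA (fun f hf => (hdeg f hf).trans (Nat.le_succ d))
    (hreg _ hhom) d (Nat.le_succ d)
  refine ⟨q, hqV, hqd, ?_⟩
  rw [hqc, homogeneousComponent_of_mem ((mem_homogeneousSubmodule _ _).2 hhom), if_pos rfl]

lemma lemD {F : Finset (MvPolynomial (Fin n) K)} {d : ℕ}
    (hdeg : ∀ f ∈ F, f.totalDegree ≤ d) (hreg : regAt F d)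
    {h : MvPolynomial (Fin n) K} (hh : h ∈ V F (d + 1)) :
    ∃ (r : MvPolynomial (Fin n) K) (L : List ((Fin n →₀ ℕ) × K × MvPolynomial (Fin n) K)),
      h = r + (L.map fun t => monomial t.1 t.2.1 * t.2.2).sum ∧ r ∈ V F (d + 1) ∧
      r.totalDegree ≤ d ∧
      ∀ t ∈ L, mdeg t.1 = 1 ∧ t.2.2 ∈ V F (d + 1) ∧ t.2.2.totalDegree ≤ d ∧
        ∃ s, mdeg s = d ∧ topPart t.2.2 = monomial s (1 : K) := by
  by_cases hd : h.totalDegree ≤ d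
  · exact ⟨h, [], by simp, hh, hd, by simp⟩
  have hdeg1 : h.totalDegree = d + 1 :=
    le_antisymm (totalDegree_le_of_mem_V hh) (by omega)
  set t := homogeneousComponent (d + 1) h with htdef
  have hu_deg : ∀ u ∈ t.support, mdeg u = d + 1 := by
    intro u hu
    have hc := mem_support_iff.1 hu
    rw [htdef, coeff_homogeneousComponent] at hc
    rw [mdeg_eq_degree]
    by_contra hne
    exact hc (if_neg hne)
  have hch : ∀ u : Fin n →₀ ℕ, mdeg u = d + 1 → ∃ (j : Fin n) (q : MvPolynomial (Fin n) K),
      Finsupp.single j 1 ≤ u ∧ q ∈ V F (d + 1) ∧ q.totalDegree ≤ d ∧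
        homogeneousComponent d q = monomial (u - Finsupp.single j 1) (1 : K) ∧
        mdeg (u - Finsupp.single j 1) = d := by
    intro u hu
    have hu0 : u ≠ 0 := fun h0 => by rw [h0, mdeg_eq_zero.2 rfl] at hu; omega
    obtain ⟨j, hj⟩ := Finsupp.support_nonempty_iff.2 hu0
    have hle : Finsupp.single j 1 ≤ u :=
      Finsupp.single_le_iff.2 (Nat.one_le_iff_ne_zero.2 (Finsupp.mem_support_iff.1 hj))
    have hwdeg : mdeg (u - Finsupp.single j 1) = d := by
      have h2 := mdeg_add (u - Finsupp.single j 1) (Finsupp.single j 1)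
      rw [tsub_add_cancel_of_le hle, mdeg_single] at h2
      omega
    obtain ⟨q, hqV, hqd, hqc⟩ := lemBmon hdeg hreg hwdeg
    exact ⟨j, q, hle, hqV, hqd, hqc, hwdeg⟩
  choose J Q hle hQV hQd hQc hwdeg using hch
  set JJ : {x // x ∈ t.support} → (Fin n →₀ ℕ) :=
    fun u => Finsupp.single (J u.1 (hu_deg u.1 u.2)) 1 with hJJ
  set QQ : {x // x ∈ t.support} → MvPolynomial (Fin n) K :=
    fun u => Q u.1 (hu_deg u.1 u.2) with hQQ
  set S : MvPolynomial (Fin n) K :=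
    ∑ u ∈ t.support.attach, monomial (JJ u) (coeff u.1 t) * QQ u with hSdef
  have hJJle : ∀ u, JJ u ≤ u.1 := fun u => hle u.1 (hu_deg u.1 u.2)
  have hJJdeg : ∀ u, mdeg (JJ u) = 1 := fun u => mdeg_single _ _
  have hQQV : ∀ u, QQ u ∈ V F (d + 1) := fun u => hQV u.1 (hu_deg u.1 u.2)
  have hQQd : ∀ u, (QQ u).totalDegree ≤ d := fun u => hQd u.1 (hu_deg u.1 u.2)
  have hQQc : ∀ u, homogeneousComponent d (QQ u) = monomial (u.1 - JJ u) (1 : K) :=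
    fun u => hQc u.1 (hu_deg u.1 u.2)
  have hQQw : ∀ u, mdeg (u.1 - JJ u) = d := fun u => hwdeg u.1 (hu_deg u.1 u.2)
  refine ⟨h - S, t.support.attach.toList.map fun u => (JJ u, coeff u.1 t, QQ u),
    ?_, ?_, ?_, ?_⟩
  · rw [List.map_map]
    have : ((fun t => monomial t.1 t.2.1 * t.2.2) ∘ fun u => (JJ u, coeff u.1 t, QQ u)) =
        fun u => monomial (JJ u) (coeff u.1 t) * QQ u := rfl
    rw [this, Finset.sum_map_toList, ← hSdef]
    ring
  · refine Submodule.sub_mem _ hh (Submodule.sum_mem _ fun u _ => ?_)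
    refine V_mul_monomial' (hQQV u) _ _ ((totalDegree_monomial_mul_le _ 1 _).trans ?_)
    rw [hJJdeg u]
    have := hQQd u
    omega
  · refine totalDegree_le_of_hc_eq_zero (D := d) ?_ ?_
    · refine (totalDegree_sub h S).trans (max_le (le_of_eq hdeg1) ?_)
      rw [hSdef]
      refine (totalDegree_finset_sum _ _).trans (Finset.sup_le fun u _ => ?_)
      refine (totalDegree_monomial_mul_le _ _ _).trans ?_
      rw [hJJdeg u]
      have := hQQd u
      omega
    · rw [map_sub, ← htdef]
      have hS : homogeneousComponent (d + 1) S = t := by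
        rw [hSdef, map_sum]
        have h2 : ∀ u ∈ t.support.attach,
            homogeneousComponent (d + 1) (monomial (JJ u) (coeff u.1 t) * QQ u) =
            monomial u.1 (coeff u.1 t) := by
          intro u _
          rw [monomial_mul_eq_smul, map_smul, hc_monomial_one_mul, hJJdeg u,
            if_pos (by omega : 1 ≤ d + 1), (by omega : d + 1 - 1 = d), hQQc u,
            monomial_mul, one_mul, add_tsub_cancel_of_le (hJJle u), smul_monomial,
            smul_eq_mul, mul_one]
        rw [Finset.sum_congr rfl h2, Finset.sum_attach t.support fun v => monomial v (coeff v t)]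
        exact (as_sum t).symm
      rw [hS, sub_self]
  · intro tt htt
    rw [List.mem_map] at htt
    obtain ⟨u, _, rfl⟩ := htt
    exact ⟨hJJdeg u, hQQV u, hQQd u, u.1 - JJ u, hQQw u,
      (topPart_of_hc (hQQd u) (hQQc u)).1⟩

lemma topPart_zero : topPart (0 : MvPolynomial (Fin n) K) = 0 := by
  rw [topPart, map_zero]

lemma shift_list_sum (e : Fin n →₀ ℕ) (M : List ((Fin n →₀ ℕ) × K × MvPolynomial (Fin n) K)) :
    monomial e (1 : K) * (M.map fun t => monomial t.1 t.2.1 * t.2.2).sum =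
      ((M.map fun t => (e + t.1, t.2)).map fun t => monomial t.1 t.2.1 * t.2.2).sum := by
  rw [List.map_map, ← List.sum_map_mul_left]
  congr 1
  refine List.map_congr_left fun t _ => ?_
  show monomial e (1 : K) * (monomial t.1 t.2.1 * t.2.2) = monomial (e + t.1) t.2.1 * t.2.2
  rw [← mul_assoc, monomial_mul, one_mul]

lemma lemM {F : Finset (MvPolynomial (Fin n) K)} {d : ℕ}
    (hdeg : ∀ f ∈ F, f.totalDegree ≤ d) (hreg : regAt F d)
    {f : MvPolynomial (Fin n) K} (hf : f ∈ V F (d + 1)) (hfd : f.totalDegree ≤ d) :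
    ∀ (N : ℕ) (mon : Fin n →₀ ℕ), mdeg mon ≤ N →
    ∃ (g₀ : MvPolynomial (Fin n) K) (L : List ((Fin n →₀ ℕ) × K × MvPolynomial (Fin n) K)),
      monomial mon (1 : K) * f = g₀ + (L.map fun t => monomial t.1 t.2.1 * t.2.2).sum ∧
      g₀ ∈ V F (d + 1) ∧ g₀.totalDegree ≤ (monomial mon (1 : K) * f).totalDegree ∧
      ∀ t ∈ L, t.1 ≠ 0 ∧ t.2.2 ∈ V F (d + 1) ∧
        (monomial t.1 (1 : K) * t.2.2).totalDegree ≤ (monomial mon (1 : K) * f).totalDegree ∧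
        ∃ s, mdeg s = d ∧ topPart t.2.2 = monomial s (1 : K) := by
  have easy : ∀ mon : Fin n →₀ ℕ, (monomial mon (1 : K) * f).totalDegree ≤ d + 1 →
      ∃ (g₀ : MvPolynomial (Fin n) K) (L : List ((Fin n →₀ ℕ) × K × MvPolynomial (Fin n) K)),
      monomial mon (1 : K) * f = g₀ + (L.map fun t => monomial t.1 t.2.1 * t.2.2).sum ∧
      g₀ ∈ V F (d + 1) ∧ g₀.totalDegree ≤ (monomial mon (1 : K) * f).totalDegree ∧
      ∀ t ∈ L, t.1 ≠ 0 ∧ t.2.2 ∈ V F (d + 1) ∧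
        (monomial t.1 (1 : K) * t.2.2).totalDegree ≤ (monomial mon (1 : K) * f).totalDegree ∧
        ∃ s, mdeg s = d ∧ topPart t.2.2 = monomial s (1 : K) := by
    intro mon hE
    exact ⟨monomial mon (1 : K) * f, [], by simp, V_mul_monomial hf mon hE, le_rfl, by simp⟩
  intro N
  induction N with
  | zero =>
    intro mon hN
    refine easy mon ((totalDegree_monomial_mul_le mon 1 f).trans ?_)
    have h0 : mdeg mon = 0 := Nat.le_zero.1 hN
    omega
  | succ N ih =>
    intro mon hN
    by_cases hE : (monomial mon (1 : K) * f).totalDegree ≤ d + 1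
    · exact easy mon hE
    push_neg at hE
    have hf0 : f ≠ 0 := by
      rintro rfl
      rw [mul_zero, totalDegree_zero] at hE
      omega
    have hmon0 : mon ≠ 0 := by
      rintro rfl
      rw [totalDegree_monomial_one_mul _ hf0, mdeg_eq_zero.2 rfl] at hE
      omega
    obtain ⟨j, hj⟩ := Finsupp.support_nonempty_iff.2 hmon0
    have hle : Finsupp.single j 1 ≤ mon :=
      Finsupp.single_le_iff.2 (Nat.one_le_iff_ne_zero.2 (Finsupp.mem_support_iff.1 hj))
    set mon' := mon - Finsupp.single j 1 with hmon'
    have hsplit : Finsupp.single j 1 + mon' = mon := add_tsub_cancel_of_le hle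
    have hmdeg : mdeg mon = 1 + mdeg mon' := by
      have h2 := mdeg_add (Finsupp.single j 1) mon'
      rw [hsplit, mdeg_single] at h2
      exact h2
    obtain ⟨g₀, L, heq, hg₀V, hg₀d, hterms⟩ := ih mon' (by omega)
    obtain ⟨r, Lq, hreq, hrV, hrd, hqterms⟩ := lemD hdeg hreg hg₀V
    have hdegf : (monomial mon (1 : K) * f).totalDegree = mdeg mon + f.totalDegree :=
      totalDegree_monomial_one_mul mon hf0
    have hdegf' : (monomial mon' (1 : K) * f).totalDegree = mdeg mon' + f.totalDegree :=
      totalDegree_monomial_one_mul mon' hf0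
    have hmm : monomial mon (1 : K) * f =
        monomial (Finsupp.single j 1) (1 : K) * (monomial mon' (1 : K) * f) := by
      rw [← mul_assoc, monomial_mul, one_mul, hsplit]
    refine ⟨monomial (Finsupp.single j 1) (1 : K) * r,
      (Lq.map fun t => (Finsupp.single j 1 + t.1, t.2)) ++
        (L.map fun t => (Finsupp.single j 1 + t.1, t.2)), ?_, ?_, ?_, ?_⟩
    · rw [hmm, heq, hreq, mul_add, mul_add, List.map_append, List.sum_append,
        shift_list_sum, shift_list_sum, add_assoc]
    · refine V_mul_monomial hrV _ ((totalDegree_monomial_mul_le _ 1 _).trans ?_)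
      rw [mdeg_single]
      omega
    · refine (totalDegree_monomial_mul_le _ 1 _).trans ?_
      rw [mdeg_single]
      omega
    · intro tt htt
      rw [List.mem_append] at htt
      rcases htt with htt | htt
      · rw [List.mem_map] at htt
        obtain ⟨u, hu, rfl⟩ := htt
        dsimp only
        obtain ⟨hu1, huV, hud, s, hs, htop⟩ := hqterms u hu
        refine ⟨?_, huV, ?_, s, hs, htop⟩
        · intro h0
          have := mdeg_add (Finsupp.single j 1) u.1
          rw [h0] at this
          rw [mdeg_eq_zero.2 rfl] at this
          rw [mdeg_single] at this
          omega
        · refine (totalDegree_monomial_mul_le _ 1 _).trans ?_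
          rw [mdeg_add, mdeg_single, hu1]
          omega
      · rw [List.mem_map] at htt
        obtain ⟨u, hu, rfl⟩ := htt
        dsimp only
        obtain ⟨hu1, huV, hud, s, hs, htop⟩ := hterms u hu
        have hune : u.2.2 ≠ 0 := by
          rintro h0
          rw [h0, topPart_zero] at htop
          exact one_ne_zero (monomial_eq_zero.1 htop.symm)
        refine ⟨?_, huV, ?_, s, hs, htop⟩
        · intro h0
          have := mdeg_add (Finsupp.single j 1) u.1
          rw [h0, mdeg_eq_zero.2 rfl, mdeg_single] at this
          omega
        · rw [totalDegree_monomial_one_mul _ hune] at hud ⊢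
          rw [mdeg_add, mdeg_single]
          omega

end AuxLemmas

/-- Lemma 3.5: for a monomial `m` and `f ∈ V_{F,d+1}` with `deg f ≤ d`, the product `m·f`
admits a representation `Σ mᵢ aᵢ gᵢ` with each `gᵢ ∈ V_{F,d+1}`, `deg(mᵢ gᵢ) ≤ deg(m f)`,
exactly one term with `mᵢ = 1`, and all other `gᵢ` with top part a monic monomial of degree `d`. -/
theorem stmt2 {n : ℕ} {K : Type*} [Field K] (F : Finset (MvPolynomial (Fin n) K)) (d : ℕ)
    (hdeg : ∀ f ∈ F, f.totalDegree ≤ d)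
    (hreg : IsLeast {e | regAt F e} d)
    (mon : Fin n →₀ ℕ) (f : MvPolynomial (Fin n) K)
    (hf : f ∈ V F (d + 1)) (hfd : f.totalDegree ≤ d) :
    ∃ (ℓ : ℕ) (mo : Fin ℓ → (Fin n →₀ ℕ)) (a : Fin ℓ → K)
      (g : Fin ℓ → MvPolynomial (Fin n) K),
      monomial mon (1 : K) * f = ∑ i, monomial (mo i) (a i) * g i ∧
      (∀ i, g i ∈ V F (d + 1)) ∧
      (∀ i, (monomial (mo i) (1 : K) * g i).totalDegree ≤
        (monomial mon (1 : K) * f).totalDegree) ∧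
      (∃! i, mo i = 0) ∧
      (∀ i, mo i ≠ 0 →
        ∃ s : Fin n →₀ ℕ, mdeg s = d ∧ topPart (g i) = monomial s (1 : K)) := by
  obtain ⟨g₀, L, heq, hg₀V, hg₀d, hterms⟩ := lemM hdeg hreg.1 hf hfd (mdeg mon) mon le_rfl
  refine ⟨L.length + 1,
    Fin.cases 0 (fun i => (L.get i).1),
    Fin.cases 1 (fun i => (L.get i).2.1),
    Fin.cases g₀ (fun i => (L.get i).2.2), ?_, ?_, ?_, ?_, ?_⟩
  · rw [Fin.sum_univ_succ]
    simp only [Fin.cases_zero, Fin.cases_succ]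
    rw [monomial_zero', C_1, one_mul, heq]
    congr 1
    rw [← Fin.sum_univ_fun_getElem L fun t => monomial t.1 t.2.1 * t.2.2]
    rfl
  · intro i
    refine Fin.cases hg₀V (fun k => ?_) i
    simp only [Fin.cases_succ]
    exact (hterms _ (L.get_mem k)).2.1
  · intro i
    refine Fin.cases ?_ (fun k => ?_) i
    · simp only [Fin.cases_zero]
      rw [monomial_zero', C_1, one_mul]
      exact hg₀d
    · simp only [Fin.cases_succ]
      exact (hterms _ (L.get_mem k)).2.2.1
  · refine ⟨0, rfl, fun i hi => ?_⟩
    rcases Fin.eq_zero_or_eq_succ i with h | ⟨k, rfl⟩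
    · exact h
    · simp only [Fin.cases_succ] at hi
      exact absurd hi (hterms _ (L.get_mem k)).1
  · intro i hi
    rcases Fin.eq_zero_or_eq_succ i with rfl | ⟨k, rfl⟩
    · simp only [Fin.cases_zero] at hi
      exact absurd rfl hi
    · simp only [Fin.cases_succ]
      exact (hterms _ (L.get_mem k)).2.2.2
end
end

section
/- For every integer k > 1, the family F_k = {x^k + y, y^k + x, xy} in K[x,y] satisfies: (a) d_reg(F_k) = k; (b) the ideal (F_k) contains x and y, so {x, y} is the reduced Gröbner basis for every term order; (c) x, y ∉ V_{F_k,k} but x, y ∈ V_{F_k,k+1}; hence sd_σ(F_k) = k+1 = d_reg(F_k) + 1 for every degree-compatible term order σ. -/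
open MvPolynomial

noncomputable section

/-- The leading monomial (exponent vector) of `f` with respect to a monomial order. -/
def lm {n : ℕ} {K : Type*} [Field K] (m : MonomialOrder (Fin n))
    (f : MvPolynomial (Fin n) K) : Fin n →₀ ℕ :=
  m.toSyn.symm (f.support.sup fun s => m.toSyn s)

/-- A monomial order is degree-compatible if monomials of smaller degree are smaller. -/
def DegCompatible {n : ℕ} (m : MonomialOrder (Fin n)) : Prop :=
  ∀ s t : Fin n →₀ ℕ, mdeg s < mdeg t → m.toSyn s < m.toSyn t

/-- `G` is a Gröbner basis of `I` w.r.t. `m` : `G ⊆ I` and the leading monomial of every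
nonzero element of `I` is divisible by the leading monomial of some nonzero element of `G`. -/
def IsGrobnerBasis {n : ℕ} {K : Type*} [Field K] (m : MonomialOrder (Fin n))
    (I : Ideal (MvPolynomial (Fin n) K)) (G : Finset (MvPolynomial (Fin n) K)) : Prop :=
  (↑G : Set (MvPolynomial (Fin n) K)) ⊆ ↑I ∧
    ∀ f ∈ I, f ≠ 0 → ∃ g ∈ G, g ≠ 0 ∧ lm m g ≤ lm m f

/-- `G` is the reduced Gröbner basis: a Gröbner basis, monic, and no monomial occurring in an
element of `G` is divisible by the leading monomial of another element of `G`. -/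
def IsReducedGB {n : ℕ} {K : Type*} [Field K] (m : MonomialOrder (Fin n))
    (I : Ideal (MvPolynomial (Fin n) K)) (G : Finset (MvPolynomial (Fin n) K)) : Prop :=
  IsGrobnerBasis m I G ∧ (∀ g ∈ G, coeff (lm m g) g = 1) ∧
    ∀ g ∈ G, ∀ g' ∈ G, g ≠ g' → ∀ s ∈ g.support, ¬ lm m g' ≤ s

namespace Stmt6Aux

open Finsupp

lemma fin2_ext {u v : Fin 2 →₀ ℕ} (h0 : u 0 = v 0) (h1 : u 1 = v 1) : u = v := by
  ext i
  fin_cases i <;> assumption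

lemma mdeg_eq (s : Fin 2 →₀ ℕ) : mdeg s = s 0 + s 1 := by
  rw [mdeg, Finsupp.sum_fintype _ _ (fun _ => rfl), Fin.sum_univ_two]

variable {K : Type*} [Field K] {k : ℕ}

lemma lm_mem_support (m : MonomialOrder (Fin 2)) {f : MvPolynomial (Fin 2) K} (hf : f ≠ 0) :
    lm m f ∈ f.support := by
  obtain ⟨s, hs, h⟩ := f.support.exists_mem_eq_sup (support_nonempty.mpr hf)
    (fun s => m.toSyn s)
  rw [lm, h, AddEquiv.symm_apply_apply]
  exact hs

lemma le_lm (m : MonomialOrder (Fin 2)) {f : MvPolynomial (Fin 2) K} {s : Fin 2 →₀ ℕ}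
    (hs : s ∈ f.support) : m.toSyn s ≤ m.toSyn (lm m f) := by
  rw [lm, AddEquiv.apply_symm_apply]
  exact Finset.le_sup hs

lemma lm_X (m : MonomialOrder (Fin 2)) (i : Fin 2) :
    lm m (X i : MvPolynomial (Fin 2) K) = Finsupp.single i 1 := by
  rw [lm, support_X, Finset.sup_singleton, AddEquiv.symm_apply_apply]

lemma XY_eq : (X 0 * X 1 : MvPolynomial (Fin 2) K) =
    monomial (Finsupp.single 0 1 + Finsupp.single 1 1) 1 := by
  rw [X, X, monomial_mul, one_mul]

lemma coeff_XY (v : Fin 2 →₀ ℕ) : coeff v (X 0 * X 1 : MvPolynomial (Fin 2) K) =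
    if Finsupp.single 0 1 + Finsupp.single 1 1 = v then 1 else 0 := by
  rw [XY_eq, coeff_monomial]

lemma totalDegree_XY : (X 0 * X 1 : MvPolynomial (Fin 2) K).totalDegree = 2 := by
  rw [XY_eq, totalDegree_monomial _ (one_ne_zero)]
  rw [show ((Finsupp.single 0 1 + Finsupp.single 1 1 : Fin 2 →₀ ℕ).sum fun _ e => e) =
    mdeg (Finsupp.single 0 1 + Finsupp.single 1 1) from rfl, mdeg_eq]
  simp

/-- The obstruction submodule. -/
def W (K : Type*) [Field K] (k : ℕ) : Submodule K (MvPolynomial (Fin 2) K) where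
  carrier := {f | f.totalDegree ≤ k ∧
    coeff (Finsupp.single 0 1) f = coeff (Finsupp.single 1 k) f ∧
    coeff (Finsupp.single 1 1) f = coeff (Finsupp.single 0 k) f ∧
    (∀ j, j ≠ 1 → j ≠ k → coeff (Finsupp.single 0 j) f = 0) ∧
    (∀ j, j ≠ 1 → j ≠ k → coeff (Finsupp.single 1 j) f = 0)}
  add_mem' := by
    rintro a b ⟨ha0, ha1, ha2, ha3, ha4⟩ ⟨hb0, hb1, hb2, hb3, hb4⟩
    refine ⟨le_trans (totalDegree_add a b) (max_le ha0 hb0), ?_, ?_, ?_, ?_⟩ <;>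
      simp_all [coeff_add]
  zero_mem' := by simp
  smul_mem' := by
    rintro c f ⟨h0, h1, h2, h3, h4⟩
    refine ⟨le_trans (totalDegree_smul_le c f) h0, ?_, ?_, ?_, ?_⟩ <;>
      simp_all [coeff_smul]

lemma mem_W_iff {f : MvPolynomial (Fin 2) K} : f ∈ W K k ↔ f.totalDegree ≤ k ∧
    coeff (Finsupp.single 0 1) f = coeff (Finsupp.single 1 k) f ∧
    coeff (Finsupp.single 1 1) f = coeff (Finsupp.single 0 k) f ∧
    (∀ j, j ≠ 1 → j ≠ k → coeff (Finsupp.single 0 j) f = 0) ∧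
    (∀ j, j ≠ 1 → j ≠ k → coeff (Finsupp.single 1 j) f = 0) := Iff.rfl

lemma tdeg_g1 (hk : 0 < k) : (X 0 ^ k + X 1 : MvPolynomial (Fin 2) K).totalDegree ≤ k := by
  refine le_trans (totalDegree_add _ _) (max_le ?_ ?_)
  · rw [totalDegree_X_pow]
  · rw [totalDegree_X]; omega

lemma tdeg_g2 (hk : 0 < k) : (X 1 ^ k + X 0 : MvPolynomial (Fin 2) K).totalDegree ≤ k := by
  refine le_trans (totalDegree_add _ _) (max_le ?_ ?_)
  · rw [totalDegree_X_pow]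
  · rw [totalDegree_X]; omega

lemma g1_mem_W (hk : 1 < k) : (X 0 ^ k + X 1 : MvPolynomial (Fin 2) K) ∈ W K k := by
  refine ⟨tdeg_g1 (by omega), ?_, ?_, ?_, ?_⟩ <;>
  · simp only [coeff_add, coeff_single_X_pow, coeff_single_X]
    first
      | (intro j hj1 hjk; split_ifs <;> simp_all <;> omega)
      | (split_ifs <;> simp_all)

lemma g2_mem_W (hk : 1 < k) : (X 1 ^ k + X 0 : MvPolynomial (Fin 2) K) ∈ W K k := by
  refine ⟨tdeg_g2 (by omega), ?_, ?_, ?_, ?_⟩ <;>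
  · simp only [coeff_add, coeff_single_X_pow, coeff_single_X]
    first
      | (intro j hj1 hjk; split_ifs <;> simp_all <;> omega)
      | (split_ifs <;> simp_all)

lemma single_ne_add (i : Fin 2) (j : ℕ) :
    Finsupp.single 0 1 + Finsupp.single 1 1 ≠ Finsupp.single i j := by
  intro h
  fin_cases i
  · have := DFunLike.congr_fun h (1 : Fin 2)
    simp [Finsupp.single_apply] at this
  · have := DFunLike.congr_fun h (0 : Fin 2)
    simp [Finsupp.single_apply] at this

lemma g3_mem_W (hk : 1 < k) : (X 0 * X 1 : MvPolynomial (Fin 2) K) ∈ W K k := by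
  refine ⟨le_trans (le_of_eq totalDegree_XY) (by omega), ?_, ?_, ?_, ?_⟩ <;>
    simp [coeff_XY, single_ne_add]

lemma X0_not_mem_W (hk : 1 < k) : (X 0 : MvPolynomial (Fin 2) K) ∉ W K k := by
  rintro ⟨-, h, -, -, -⟩
  rw [coeff_single_X, coeff_single_X] at h
  simp only [if_pos, if_neg] at h
  split_ifs at h <;> simp_all <;> omega

lemma X1_not_mem_W (hk : 1 < k) : (X 1 : MvPolynomial (Fin 2) K) ∉ W K k := by
  rintro ⟨-, -, h, -, -⟩
  rw [coeff_single_X, coeff_single_X] at h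
  simp only [if_pos, if_neg] at h
  split_ifs at h <;> simp_all <;> omega

lemma pure_coeffs_vanish {f : MvPolynomial (Fin 2) K}
    (hx : ∀ j, coeff (Finsupp.single 0 j) f = 0)
    (hy : ∀ j, coeff (Finsupp.single 1 j) f = 0)
    {u : Fin 2 →₀ ℕ} (hu : coeff u f ≠ 0) : 1 ≤ u 0 ∧ 1 ≤ u 1 := by
  constructor
  · by_contra h
    have h0 : u 0 = 0 := by omega
    have : u = Finsupp.single 1 (u 1) := fin2_ext (by simp [h0]) (by simp)
    exact hu (this ▸ hy (u 1))
  · by_contra h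
    have h1 : u 1 = 0 := by omega
    have : u = Finsupp.single 0 (u 0) := fin2_ext (by simp) (by simp [h1])
    exact hu (this ▸ hx (u 0))

lemma W_closed (hk : 1 < k) (s : Fin 2 →₀ ℕ) (f : MvPolynomial (Fin 2) K)
    (hf : f ∈ W K k) (hdeg : (monomial s (1 : K) * f).totalDegree ≤ k) :
    monomial s (1 : K) * f ∈ W K k := by
  rcases eq_or_ne s 0 with rfl | hs
  · rwa [monomial_zero', C_1, one_mul]
  obtain ⟨h0, h1, h2, h3, h4⟩ := hf
  have hmdeg : 1 ≤ mdeg s := by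
    by_contra h
    have := mdeg_eq s
    exact hs (fin2_ext (v := 0) (by simp; omega) (by simp; omega))
  -- top coefficients of f vanish
  have key : ∀ i : Fin 2, coeff (Finsupp.single i k) f = 0 := by
    intro i
    by_contra h
    have hc : coeff (s + Finsupp.single i k) (monomial s (1 : K) * f) ≠ 0 := by
      rw [coeff_monomial_mul, one_mul]; exact h
    have hle := le_totalDegree (MvPolynomial.mem_support_iff.mpr hc)
    have : mdeg (s + Finsupp.single i k) = mdeg s + k := by
      rw [mdeg_eq (s + Finsupp.single i k), mdeg_eq s]
      fin_cases i <;> simp [Finsupp.add_apply] <;> omega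
    rw [show ((s + Finsupp.single i k).sum fun _ e => e) = mdeg (s + Finsupp.single i k)
      from rfl, this] at hle
    omega
  have hx : ∀ j, coeff (Finsupp.single 0 j) f = 0 := by
    intro j
    rcases eq_or_ne j 1 with rfl | hj1
    · rw [h1]; exact key 1
    rcases eq_or_ne j k with rfl | hjk
    · exact key 0
    · exact h3 j hj1 hjk
  have hy : ∀ j, coeff (Finsupp.single 1 j) f = 0 := by
    intro j
    rcases eq_or_ne j 1 with rfl | hj1
    · rw [h2]; exact key 0
    rcases eq_or_ne j k with rfl | hjk
    · exact key 1
    · exact h4 j hj1 hjk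
  have hp : ∀ j : ℕ, ∀ i : Fin 2, coeff (Finsupp.single i j) (monomial s (1 : K) * f) = 0 := by
    intro j i
    by_contra h
    rw [coeff_monomial_mul'] at h
    split_ifs at h with hle
    · rw [one_mul] at h
      obtain ⟨t0, t1⟩ := pure_coeffs_vanish hx hy h
      rw [Finsupp.tsub_apply] at t0 t1
      fin_cases i <;> simp [Finsupp.single_apply] at t0 t1
    · exact h rfl
  exact ⟨hdeg, by rw [hp 1 0, hp k 1], by rw [hp 1 1, hp k 0], fun j _ _ => hp j 0,
    fun j _ _ => hp j 1⟩

lemma X0_mem_span (hk : 1 < k) : (X 0 : MvPolynomial (Fin 2) K) ∈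
    Ideal.span ({X 0 ^ k + X 1, X 1 ^ k + X 0, X 0 * X 1} : Set (MvPolynomial (Fin 2) K)) := by
  obtain ⟨j, rfl⟩ : ∃ j, k = j + 2 := ⟨k - 2, by omega⟩
  have h1 : (X 0 ^ (j+2) + X 1 : MvPolynomial (Fin 2) K) ∈
      Ideal.span ({X 0 ^ (j+2) + X 1, X 1 ^ (j+2) + X 0, X 0 * X 1} :
        Set (MvPolynomial (Fin 2) K)) := Ideal.subset_span (by simp)
  have h2 : (X 1 ^ (j+2) + X 0 : MvPolynomial (Fin 2) K) ∈
      Ideal.span ({X 0 ^ (j+2) + X 1, X 1 ^ (j+2) + X 0, X 0 * X 1} :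
        Set (MvPolynomial (Fin 2) K)) := Ideal.subset_span (by simp)
  have h3 : (X 0 * X 1 : MvPolynomial (Fin 2) K) ∈
      Ideal.span ({X 0 ^ (j+2) + X 1, X 1 ^ (j+2) + X 0, X 0 * X 1} :
        Set (MvPolynomial (Fin 2) K)) := Ideal.subset_span (by simp)
  have heq : (X 0 : MvPolynomial (Fin 2) K) =
      (X 1 ^ (j+2) + X 0) - X 1 ^ (j+1) * (X 0 ^ (j+2) + X 1)
        + X 0 ^ (j+1) * X 1 ^ j * (X 0 * X 1) := by ring
  have := add_mem (sub_mem h2 (Ideal.mul_mem_left _ (X 1 ^ (j+1)) h1))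
    (Ideal.mul_mem_left _ (X 0 ^ (j+1) * X 1 ^ j) h3)
  rwa [← heq] at this

lemma X1_mem_span (hk : 1 < k) : (X 1 : MvPolynomial (Fin 2) K) ∈
    Ideal.span ({X 0 ^ k + X 1, X 1 ^ k + X 0, X 0 * X 1} : Set (MvPolynomial (Fin 2) K)) := by
  obtain ⟨j, rfl⟩ : ∃ j, k = j + 2 := ⟨k - 2, by omega⟩
  have h1 : (X 0 ^ (j+2) + X 1 : MvPolynomial (Fin 2) K) ∈
      Ideal.span ({X 0 ^ (j+2) + X 1, X 1 ^ (j+2) + X 0, X 0 * X 1} :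
        Set (MvPolynomial (Fin 2) K)) := Ideal.subset_span (by simp)
  have h2 : (X 1 ^ (j+2) + X 0 : MvPolynomial (Fin 2) K) ∈
      Ideal.span ({X 0 ^ (j+2) + X 1, X 1 ^ (j+2) + X 0, X 0 * X 1} :
        Set (MvPolynomial (Fin 2) K)) := Ideal.subset_span (by simp)
  have h3 : (X 0 * X 1 : MvPolynomial (Fin 2) K) ∈
      Ideal.span ({X 0 ^ (j+2) + X 1, X 1 ^ (j+2) + X 0, X 0 * X 1} :
        Set (MvPolynomial (Fin 2) K)) := Ideal.subset_span (by simp)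
  have heq : (X 1 : MvPolynomial (Fin 2) K) =
      (X 0 ^ (j+2) + X 1) - X 0 ^ (j+1) * (X 1 ^ (j+2) + X 0)
        + X 0 ^ j * X 1 ^ (j+1) * (X 0 * X 1) := by ring
  have := add_mem (sub_mem h1 (Ideal.mul_mem_left _ (X 0 ^ (j+1)) h2))
    (Ideal.mul_mem_left _ (X 0 ^ j * X 1 ^ (j+1)) h3)
  rwa [← heq] at this

lemma span_eq (hk : 1 < k) :
    Ideal.span ({X 0 ^ k + X 1, X 1 ^ k + X 0, X 0 * X 1} : Set (MvPolynomial (Fin 2) K)) =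
    Ideal.span ({X 0, X 1} : Set (MvPolynomial (Fin 2) K)) := by
  obtain ⟨j, rfl⟩ : ∃ j, k = j + 2 := ⟨k - 2, by omega⟩
  apply le_antisymm
  · rw [Ideal.span_le]
    rintro f hf
    simp only [Set.mem_insert_iff, Set.mem_singleton_iff] at hf
    rcases hf with rfl | rfl | rfl
    · exact SetLike.mem_coe.mpr (Ideal.mem_span_pair.mpr ⟨X 0 ^ (j+1), 1, by ring⟩)
    · exact SetLike.mem_coe.mpr (Ideal.mem_span_pair.mpr ⟨1, X 1 ^ (j+1), by ring⟩)
    · exact SetLike.mem_coe.mpr (Ideal.mem_span_pair.mpr ⟨X 1, 0, by ring⟩)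
  · rw [Ideal.span_le]
    rintro f hf
    simp only [Set.mem_insert_iff, Set.mem_singleton_iff] at hf
    rcases hf with rfl | rfl
    · exact SetLike.mem_coe.mpr (X0_mem_span (by omega))
    · exact SetLike.mem_coe.mpr (X1_mem_span (by omega))

lemma coeff_zero_of_mem_span_XY {f : MvPolynomial (Fin 2) K}
    (hf : f ∈ Ideal.span ({X 0, X 1} : Set (MvPolynomial (Fin 2) K))) : coeff 0 f = 0 := by
  obtain ⟨a, b, rfl⟩ := Ideal.mem_span_pair.mp hf
  rw [show (coeff 0 (a * X 0 + b * X 1) : K) = constantCoeff (a * X 0 + b * X 1) from rfl]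
  simp

lemma X0_ne_X1 : (X 0 : MvPolynomial (Fin 2) K) ≠ X 1 := fun h => by
  have := congrArg (coeff (Finsupp.single 0 1)) h
  rw [coeff_single_X, coeff_single_X] at this
  simp at this

lemma gb_XY [DecidableEq K] (hk : 1 < k) (m : MonomialOrder (Fin 2)) :
    IsGrobnerBasis m
      (Ideal.span ({X 0 ^ k + X 1, X 1 ^ k + X 0, X 0 * X 1} : Set (MvPolynomial (Fin 2) K)))
      {X 0, X 1} := by
  constructor
  · intro f hf
    simp only [Finset.coe_insert, Finset.coe_singleton, Set.mem_insert_iff,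
      Set.mem_singleton_iff] at hf
    rcases hf with rfl | rfl
    · exact SetLike.mem_coe.mpr (X0_mem_span hk)
    · exact SetLike.mem_coe.mpr (X1_mem_span hk)
  · intro f hfI hf0
    rw [span_eq hk] at hfI
    have hc : coeff 0 f = 0 := coeff_zero_of_mem_span_XY hfI
    have hsup := lm_mem_support m hf0
    have hne : lm m f ≠ 0 := by
      intro h
      rw [h] at hsup
      exact (MvPolynomial.mem_support_iff.mp hsup) hc
    have : 1 ≤ lm m f 0 ∨ 1 ≤ lm m f 1 := by
      by_contra h
      push_neg at h
      exact hne (fin2_ext (v := 0) (by simp; omega) (by simp; omega))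
    rcases this with h | h
    · exact ⟨X 0, by simp, X_ne_zero 0, by rw [lm_X]; exact Finsupp.single_le_iff.mpr h⟩
    · exact ⟨X 1, by simp, X_ne_zero 1, by rw [lm_X]; exact Finsupp.single_le_iff.mpr h⟩

lemma tdeg_g1_eq (hk : 1 < k) : (X 0 ^ k + X 1 : MvPolynomial (Fin 2) K).totalDegree = k := by
  refine le_antisymm (tdeg_g1 (by omega)) ?_
  have hc : coeff (Finsupp.single 0 k) (X 0 ^ k + X 1 : MvPolynomial (Fin 2) K) = 1 := by
    rw [coeff_add, coeff_single_X_pow, coeff_single_X]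
    split_ifs <;> simp_all <;> omega
  have := le_totalDegree (p := (X 0 ^ k + X 1 : MvPolynomial (Fin 2) K))
    (MvPolynomial.mem_support_iff.mpr (by rw [hc]; exact one_ne_zero))
  simpa using this

lemma tdeg_g2_eq (hk : 1 < k) : (X 1 ^ k + X 0 : MvPolynomial (Fin 2) K).totalDegree = k := by
  refine le_antisymm (tdeg_g2 (by omega)) ?_
  have hc : coeff (Finsupp.single 1 k) (X 1 ^ k + X 0 : MvPolynomial (Fin 2) K) = 1 := by
    rw [coeff_add, coeff_single_X_pow, coeff_single_X]
    split_ifs <;> simp_all <;> omega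
  have := le_totalDegree (p := (X 1 ^ k + X 0 : MvPolynomial (Fin 2) K))
    (MvPolynomial.mem_support_iff.mpr (by rw [hc]; exact one_ne_zero))
  simpa using this

lemma topPart_g1 (hk : 1 < k) :
    topPart (X 0 ^ k + X 1 : MvPolynomial (Fin 2) K) = X 0 ^ k := by
  rw [topPart, tdeg_g1_eq hk, map_add,
    homogeneousComponent_of_mem ((mem_homogeneousSubmodule _ _).mpr (isHomogeneous_X_pow 0 k)),
    homogeneousComponent_of_mem ((mem_homogeneousSubmodule _ _).mpr (isHomogeneous_X _ 1))]
  rw [if_pos rfl, if_neg (show ¬ k = 1 by omega), add_zero]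

lemma topPart_g2 (hk : 1 < k) :
    topPart (X 1 ^ k + X 0 : MvPolynomial (Fin 2) K) = X 1 ^ k := by
  rw [topPart, tdeg_g2_eq hk, map_add,
    homogeneousComponent_of_mem ((mem_homogeneousSubmodule _ _).mpr (isHomogeneous_X_pow 1 k)),
    homogeneousComponent_of_mem ((mem_homogeneousSubmodule _ _).mpr (isHomogeneous_X _ 0))]
  rw [if_pos rfl, if_neg (show ¬ k = 1 by omega), add_zero]

lemma isHomogeneous_XY : (X 0 * X 1 : MvPolynomial (Fin 2) K).IsHomogeneous 2 :=
  (isHomogeneous_X _ 0).mul (isHomogeneous_X _ 1)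

lemma topPart_g3 : topPart (X 0 * X 1 : MvPolynomial (Fin 2) K) = X 0 * X 1 := by
  rw [topPart, totalDegree_XY,
    homogeneousComponent_of_mem ((mem_homogeneousSubmodule _ _).mpr isHomogeneous_XY),
    if_pos rfl]

lemma regAt_k (hk : 1 < k) {p : MvPolynomial (Fin 2) K} (hp : p.IsHomogeneous k) :
    p ∈ Ideal.span ({X 0 ^ k, X 1 ^ k, X 0 * X 1} : Set (MvPolynomial (Fin 2) K)) := by
  rw [p.as_sum]
  refine Ideal.sum_mem _ (fun s hs => ?_)
  have hdeg : s 0 + s 1 = k := by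
    have := hp (MvPolynomial.mem_support_iff.mp hs)
    erw [← Finsupp.degree_eq_weight_one] at this
    rw [← mdeg_eq]
    exact this
  rcases Nat.eq_zero_or_pos (s 1) with h1 | h1
  · have : s = Finsupp.single 0 k := fin2_ext (by simp; omega) (by simp; omega)
    rw [this]
    have heq : (monomial (Finsupp.single (0 : Fin 2) k)) (coeff (Finsupp.single (0 : Fin 2) k) p) =
        C (coeff (Finsupp.single (0 : Fin 2) k) p) * (X 0 : MvPolynomial (Fin 2) K) ^ k := by
      rw [X_pow_eq_monomial, C_mul_monomial, mul_one]
    have hm := Ideal.mul_mem_left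
      (Ideal.span ({X 0 ^ k, X 1 ^ k, X 0 * X 1} : Set (MvPolynomial (Fin 2) K)))
      (C (coeff (Finsupp.single (0 : Fin 2) k) p))
      (Ideal.subset_span (show (X 0 ^ k : MvPolynomial (Fin 2) K) ∈ _ by simp))
    rwa [← heq] at hm
  rcases Nat.eq_zero_or_pos (s 0) with h0 | h0
  · have : s = Finsupp.single 1 k := fin2_ext (by simp; omega) (by simp; omega)
    rw [this]
    have heq : (monomial (Finsupp.single (1 : Fin 2) k)) (coeff (Finsupp.single (1 : Fin 2) k) p) =
        C (coeff (Finsupp.single (1 : Fin 2) k) p) * (X 1 : MvPolynomial (Fin 2) K) ^ k := by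
      rw [X_pow_eq_monomial, C_mul_monomial, mul_one]
    have hm := Ideal.mul_mem_left
      (Ideal.span ({X 0 ^ k, X 1 ^ k, X 0 * X 1} : Set (MvPolynomial (Fin 2) K)))
      (C (coeff (Finsupp.single (1 : Fin 2) k) p))
      (Ideal.subset_span (show (X 1 ^ k : MvPolynomial (Fin 2) K) ∈ _ by simp))
    rwa [← heq] at hm
  · have hle : (Finsupp.single 0 1 + Finsupp.single 1 1 : Fin 2 →₀ ℕ) ≤ s := by
      rw [Finsupp.le_def]
      intro i
      fin_cases i <;> simp [Finsupp.add_apply, Finsupp.single_apply] <;> omega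
    have : (monomial s) (coeff s p) =
        monomial (s - (Finsupp.single 0 1 + Finsupp.single 1 1)) (coeff s p) * (X 0 * X 1) := by
      rw [XY_eq, monomial_mul, mul_one, tsub_add_cancel_of_le hle]
    rw [this]
    exact Ideal.mul_mem_left _ _ (Ideal.subset_span (by simp))

lemma not_regAt (hk : 1 < k) {e : ℕ} (he : e < k)
    (h : (X 0 ^ e : MvPolynomial (Fin 2) K) ∈
      Ideal.span ({X 0 ^ k, X 1 ^ k, X 0 * X 1} : Set (MvPolynomial (Fin 2) K))) : False := by
  set φ : MvPolynomial (Fin 2) K →+* Polynomial K :=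
    (aeval ![Polynomial.X, 0] : MvPolynomial (Fin 2) K →ₐ[K] Polynomial K).toRingHom with hφ
  have hmem : φ (X 0 ^ e) ∈ Ideal.map φ
      (Ideal.span ({X 0 ^ k, X 1 ^ k, X 0 * X 1} : Set (MvPolynomial (Fin 2) K))) :=
    Ideal.mem_map_of_mem φ h
  rw [Ideal.map_span] at hmem
  have himg : φ '' {X 0 ^ k, X 1 ^ k, X 0 * X 1} ⊆
      (Ideal.span ({Polynomial.X ^ k} : Set (Polynomial K)) : Set (Polynomial K)) := by
    rintro q ⟨f, hf, rfl⟩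
    simp only [Set.mem_insert_iff, Set.mem_singleton_iff] at hf
    rcases hf with rfl | rfl | rfl
    · have h1 : φ (X 0 ^ k) = Polynomial.X ^ k := by simp [hφ, map_pow]
      rw [h1]
      exact SetLike.mem_coe.mpr (Ideal.subset_span rfl)
    · have h1 : φ (X 1 ^ k) = 0 := by
        simp [hφ, map_pow, zero_pow (show k ≠ 0 by omega)]
      rw [h1]
      exact SetLike.mem_coe.mpr (Ideal.zero_mem _)
    · have h1 : φ (X 0 * X 1) = 0 := by simp [hφ]
      rw [h1]
      exact SetLike.mem_coe.mpr (Ideal.zero_mem _)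
  have : φ (X 0 ^ e) ∈ Ideal.span ({Polynomial.X ^ k} : Set (Polynomial K)) := by
    refine Ideal.span_le.mpr himg hmem
  have hXe : φ (X 0 ^ e) = Polynomial.X ^ e := by simp [hφ, map_pow, aeval_X]
  rw [hXe, Ideal.mem_span_singleton] at this
  have hne : (Polynomial.X ^ e : Polynomial K) ≠ 0 := pow_ne_zero _ Polynomial.X_ne_zero
  have := Polynomial.natDegree_le_of_dvd this hne
  rw [Polynomial.natDegree_X_pow, Polynomial.natDegree_X_pow] at this
  omega

lemma V_mono {F : Finset (MvPolynomial (Fin 2) K)} {e d : ℕ} (h : e ≤ d) : V F e ≤ V F d := by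
  apply sInf_le_sInf
  rintro Wm ⟨hgen, hcl⟩
  exact ⟨fun f hf hdf => hgen f hf (le_trans hdf h),
    fun s f hf hdf => hcl s f hf (le_trans hdf h)⟩

lemma V_le_W [DecidableEq K] (hk : 1 < k) :
    V ({X 0 ^ k + X 1, X 1 ^ k + X 0, X 0 * X 1} : Finset (MvPolynomial (Fin 2) K)) k ≤ W K k := by
  apply sInf_le
  constructor
  · intro f hf _
    rcases Finset.mem_insert.mp hf with rfl | hf
    · exact g1_mem_W hk
    rcases Finset.mem_insert.mp hf with rfl | hf
    · exact g2_mem_W hk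
    rw [Finset.mem_singleton] at hf
    subst hf
    exact g3_mem_W hk
  · exact fun s f hf hd => W_closed hk s f hf hd

lemma X_mem_of_closed (hk : 1 < k) (Wm : Submodule K (MvPolynomial (Fin 2) K))
    (hg1 : (X 0 ^ k + X 1 : MvPolynomial (Fin 2) K) ∈ Wm)
    (hg2 : (X 1 ^ k + X 0 : MvPolynomial (Fin 2) K) ∈ Wm)
    (hg3 : (X 0 * X 1 : MvPolynomial (Fin 2) K) ∈ Wm)
    (hcl : ∀ (s : Fin 2 →₀ ℕ), ∀ f ∈ Wm,
      (monomial s (1 : K) * f).totalDegree ≤ k + 1 → monomial s (1 : K) * f ∈ Wm) :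
    (X 0 : MvPolynomial (Fin 2) K) ∈ Wm ∧ (X 1 : MvPolynomial (Fin 2) K) ∈ Wm := by
  obtain ⟨j, rfl⟩ : ∃ j, k = j + 2 := ⟨k - 2, by omega⟩
  have hm1 : (monomial (Finsupp.single 1 1) (1 : K)) = (X 1 : MvPolynomial (Fin 2) K) :=
    rfl
  have hm0 : (monomial (Finsupp.single 0 1) (1 : K)) = (X 0 : MvPolynomial (Fin 2) K) :=
    rfl
  -- step 1 : X 1 * g1 ∈ Wm and X 0 * g2 ∈ Wm
  have t1 : (X 1 * (X 0 ^ (j+2) + X 1) : MvPolynomial (Fin 2) K) ∈ Wm := by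
    have := hcl (Finsupp.single 1 1) _ hg1 (by
      rw [hm1]
      refine le_trans (totalDegree_mul _ _) ?_
      rw [totalDegree_X]
      have := tdeg_g1 (K := K) (k := j + 2) (by omega)
      omega)
    rwa [hm1] at this
  have t1' : (X 0 * (X 1 ^ (j+2) + X 0) : MvPolynomial (Fin 2) K) ∈ Wm := by
    have := hcl (Finsupp.single 0 1) _ hg2 (by
      rw [hm0]
      refine le_trans (totalDegree_mul _ _) ?_
      rw [totalDegree_X]
      have := tdeg_g2 (K := K) (k := j + 2) (by omega)
      omega)
    rwa [hm0] at this
  -- step 2 : x^{k-1} xy and y^{k-1} xy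
  have t2 : (X 0 ^ (j+1) * (X 0 * X 1) : MvPolynomial (Fin 2) K) ∈ Wm := by
    have := hcl (Finsupp.single 0 (j+1)) _ hg3 (by
      rw [← X_pow_eq_monomial]
      refine le_trans (totalDegree_mul _ _) ?_
      have h1 : ((X 0 : MvPolynomial (Fin 2) K) ^ (j+1)).totalDegree = j+1 :=
        totalDegree_X_pow _ _
      have h2 := totalDegree_XY (K := K)
      omega)
    rwa [← X_pow_eq_monomial] at this
  have t2' : (X 1 ^ (j+1) * (X 0 * X 1) : MvPolynomial (Fin 2) K) ∈ Wm := by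
    have := hcl (Finsupp.single 1 (j+1)) _ hg3 (by
      rw [← X_pow_eq_monomial]
      refine le_trans (totalDegree_mul _ _) ?_
      have h1 : ((X 1 : MvPolynomial (Fin 2) K) ^ (j+1)).totalDegree = j+1 :=
        totalDegree_X_pow _ _
      have h2 := totalDegree_XY (K := K)
      omega)
    rwa [← X_pow_eq_monomial] at this
  -- step 3 : y^2 and x^2
  have y2 : ((X 1 : MvPolynomial (Fin 2) K) ^ 2) ∈ Wm := by
    have heq : ((X 1 : MvPolynomial (Fin 2) K) ^ 2) =
        X 1 * (X 0 ^ (j+2) + X 1) - X 0 ^ (j+1) * (X 0 * X 1) := by ring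
    rw [heq]
    exact sub_mem t1 t2
  have x2 : ((X 0 : MvPolynomial (Fin 2) K) ^ 2) ∈ Wm := by
    have heq : ((X 0 : MvPolynomial (Fin 2) K) ^ 2) =
        X 0 * (X 1 ^ (j+2) + X 0) - X 1 ^ (j+1) * (X 0 * X 1) := by ring
    rw [heq]
    exact sub_mem t1' t2'
  -- step 4 : y^k and x^k
  have yk : ((X 1 : MvPolynomial (Fin 2) K) ^ (j+2)) ∈ Wm := by
    have heq : monomial (Finsupp.single 1 j) (1 : K) * (X 1 : MvPolynomial (Fin 2) K) ^ 2
        = X 1 ^ (j + 2) := by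
      rw [← X_pow_eq_monomial]
      ring
    have := hcl (Finsupp.single 1 j) _ y2 (by
      rw [heq]
      have h1 : ((X 1 : MvPolynomial (Fin 2) K) ^ (j+2)).totalDegree = j+2 :=
        totalDegree_X_pow _ _
      omega)
    rwa [heq] at this
  have xk : ((X 0 : MvPolynomial (Fin 2) K) ^ (j+2)) ∈ Wm := by
    have heq : monomial (Finsupp.single 0 j) (1 : K) * (X 0 : MvPolynomial (Fin 2) K) ^ 2
        = X 0 ^ (j + 2) := by
      rw [← X_pow_eq_monomial]
      ring
    have := hcl (Finsupp.single 0 j) _ x2 (by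
      rw [heq]
      have h1 : ((X 0 : MvPolynomial (Fin 2) K) ^ (j+2)).totalDegree = j+2 :=
        totalDegree_X_pow _ _
      omega)
    rwa [heq] at this
  -- step 5
  constructor
  · have heq : (X 0 : MvPolynomial (Fin 2) K) = (X 1 ^ (j+2) + X 0) - X 1 ^ (j+2) := by ring
    rw [heq]
    exact sub_mem hg2 yk
  · have heq : (X 1 : MvPolynomial (Fin 2) K) = (X 0 ^ (j+2) + X 1) - X 0 ^ (j+2) := by ring
    rw [heq]
    exact sub_mem hg1 xk

lemma X_mem_V [DecidableEq K] (hk : 1 < k) :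
    (X 0 : MvPolynomial (Fin 2) K) ∈
      V ({X 0 ^ k + X 1, X 1 ^ k + X 0, X 0 * X 1} : Finset (MvPolynomial (Fin 2) K)) (k + 1) ∧
    (X 1 : MvPolynomial (Fin 2) K) ∈
      V ({X 0 ^ k + X 1, X 1 ^ k + X 0, X 0 * X 1} : Finset (MvPolynomial (Fin 2) K)) (k + 1) := by
  have main : ∀ Wm ∈ {Wm : Submodule K (MvPolynomial (Fin 2) K) |
      (∀ f ∈ ({X 0 ^ k + X 1, X 1 ^ k + X 0, X 0 * X 1} : Finset (MvPolynomial (Fin 2) K)),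
        f.totalDegree ≤ k + 1 → f ∈ Wm) ∧
      ∀ (s : Fin 2 →₀ ℕ), ∀ f ∈ Wm,
        (monomial s (1 : K) * f).totalDegree ≤ k + 1 → monomial s (1 : K) * f ∈ Wm},
      (X 0 : MvPolynomial (Fin 2) K) ∈ Wm ∧ (X 1 : MvPolynomial (Fin 2) K) ∈ Wm := by
    rintro Wm ⟨hgen, hcl⟩
    refine X_mem_of_closed hk Wm ?_ ?_ ?_ hcl
    · exact hgen _ (by simp) (le_trans (tdeg_g1 (by omega)) (by omega))
    · exact hgen _ (by simp [Finset.mem_insert]) (le_trans (tdeg_g2 (by omega)) (by omega))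
    · exact hgen _ (by simp [Finset.mem_insert]) (le_trans (le_of_eq totalDegree_XY) (by omega))
  constructor <;>
  · rw [V, Submodule.mem_sInf]
    intro Wm hWm
    first
      | exact (main Wm hWm).1
      | exact (main Wm hWm).2

lemma mdeg_single (i : Fin 2) (j : ℕ) : mdeg (Finsupp.single i j) = j := by
  rw [mdeg_eq]
  fin_cases i <;> simp

lemma lower_bound [DecidableEq K] (hk : 1 < k) (m : MonomialOrder (Fin 2))
    (hm : DegCompatible m) {e : ℕ} (G : Finset (MvPolynomial (Fin 2) K))
    (hGV : ∀ g ∈ G, g ∈ V ({X 0 ^ k + X 1, X 1 ^ k + X 0, X 0 * X 1} :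
      Finset (MvPolynomial (Fin 2) K)) e)
    (hGB : IsGrobnerBasis m
      (Ideal.span ({X 0 ^ k + X 1, X 1 ^ k + X 0, X 0 * X 1} : Set (MvPolynomial (Fin 2) K))) G) :
    k + 1 ≤ e := by
  by_contra h
  push_neg at h
  have hGW : ∀ g ∈ G, g ∈ W K k := fun g hg =>
    V_le_W hk (V_mono (F := ({X 0 ^ k + X 1, X 1 ^ k + X 0, X 0 * X 1} :
      Finset (MvPolynomial (Fin 2) K))) (show e ≤ k by omega) (hGV g hg))
  obtain ⟨g, hgG, hg0, hle⟩ := hGB.2 (X 0) (X0_mem_span hk) (X_ne_zero 0)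
  rw [lm_X] at hle
  obtain ⟨-, h1, h2, -, -⟩ := hGW g hgG
  have hu := lm_mem_support m hg0
  have hu0 : lm m g 0 ≤ 1 := by
    have := Finsupp.le_def.mp hle 0
    simpa using this
  have hu1 : lm m g 1 = 0 := by
    have := Finsupp.le_def.mp hle 1
    simpa using this
  rcases Nat.eq_zero_or_pos (lm m g 0) with h0 | h0
  · -- lm m g = 0, but the constant coefficient of g vanishes
    have hz : lm m g = 0 := fin2_ext (v := 0) (by simpa using h0) (by simpa using hu1)
    have hc : coeff (0 : Fin 2 →₀ ℕ) g = 0 := by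
      have := (hGW g hgG).2.2.2.1 0 (by omega) (by omega)
      rwa [Finsupp.single_zero] at this
    rw [hz] at hu
    exact (MvPolynomial.mem_support_iff.mp hu) hc
  · -- lm m g = x, but then coeff x g = coeff y^k g = 0
    have hz : lm m g = Finsupp.single 0 1 := fin2_ext (by simp; omega) (by simp [hu1])
    have hyk : coeff (Finsupp.single 1 k) g = 0 := by
      by_contra hc
      have hmem : Finsupp.single (1 : Fin 2) k ∈ g.support := MvPolynomial.mem_support_iff.mpr hc
      have hle2 := le_lm m hmem
      have hlt := hm (lm m g) (Finsupp.single 1 k)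
        (by rw [hz, mdeg_single, mdeg_single]; omega)
      exact absurd hle2 (not_le.mpr hlt)
    rw [hz] at hu
    have hne := MvPolynomial.mem_support_iff.mp hu
    rw [h1, hyk] at hne
    exact hne rfl

end Stmt6Aux
/-- The full optimality example: for `F_k = {x^k + y, y^k + x, xy}` with `k > 1`:
(a) `d_reg(F_k) = k`; (b) `x, y ∈ (F_k)` and `{x, y}` is the reduced Gröbner basis for every
term order; (c) `x, y ∉ V_{F_k,k}` but `x, y ∈ V_{F_k,k+1}`; hence `sd_σ(F_k) = k + 1`
for every degree-compatible term order `σ`. -/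
theorem stmt6 (K : Type*) [Field K] [DecidableEq K] (k : ℕ) (hk : 1 < k) :
    let Fk : Finset (MvPolynomial (Fin 2) K) :=
      {(X 0) ^ k + X 1, (X 1) ^ k + X 0, X 0 * X 1}
    IsLeast {e | regAt Fk e} k ∧
      (X 0 : MvPolynomial (Fin 2) K) ∈ Ideal.span (Fk : Set (MvPolynomial (Fin 2) K)) ∧
      (X 1 : MvPolynomial (Fin 2) K) ∈ Ideal.span (Fk : Set (MvPolynomial (Fin 2) K)) ∧
      (∀ m : MonomialOrder (Fin 2),
        IsReducedGB m (Ideal.span (Fk : Set (MvPolynomial (Fin 2) K)))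
          {(X 0 : MvPolynomial (Fin 2) K), X 1}) ∧
      (X 0 : MvPolynomial (Fin 2) K) ∉ V Fk k ∧
      (X 1 : MvPolynomial (Fin 2) K) ∉ V Fk k ∧
      (X 0 : MvPolynomial (Fin 2) K) ∈ V Fk (k + 1) ∧
      (X 1 : MvPolynomial (Fin 2) K) ∈ V Fk (k + 1) ∧
      ∀ m : MonomialOrder (Fin 2), DegCompatible m →
        IsLeast {e | ∃ G : Finset (MvPolynomial (Fin 2) K),
          (∀ g ∈ G, g ∈ V Fk e) ∧
            IsGrobnerBasis m (Ideal.span (Fk : Set (MvPolynomial (Fin 2) K))) G} (k + 1) := by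
  intro Fk
  have hFk : Fk = ({X 0 ^ k + X 1, X 1 ^ k + X 0, X 0 * X 1} :
      Finset (MvPolynomial (Fin 2) K)) := rfl
  have hcoe : (Fk : Set (MvPolynomial (Fin 2) K)) =
      ({X 0 ^ k + X 1, X 1 ^ k + X 0, X 0 * X 1} : Set (MvPolynomial (Fin 2) K)) := by
    rw [hFk]
    simp
  have himg : topPart '' (Fk : Set (MvPolynomial (Fin 2) K)) =
      ({X 0 ^ k, X 1 ^ k, X 0 * X 1} : Set (MvPolynomial (Fin 2) K)) := by
    rw [hcoe, Set.image_insert_eq, Set.image_insert_eq, Set.image_singleton,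
      Stmt6Aux.topPart_g1 hk, Stmt6Aux.topPart_g2 hk, Stmt6Aux.topPart_g3]
  obtain ⟨hxV, hyV⟩ := Stmt6Aux.X_mem_V (K := K) hk
  refine ⟨⟨?_, ?_⟩, ?_, ?_, ?_, ?_, ?_, ?_, ?_, ?_⟩
  · -- regAt Fk k
    intro p hp
    rw [himg]
    exact Stmt6Aux.regAt_k hk hp
  · -- lower bound for regAt
    intro e he
    by_contra hlt
    push_neg at hlt
    have := he (X 0 ^ e) (isHomogeneous_X_pow 0 e)
    rw [himg] at this
    exact Stmt6Aux.not_regAt hk hlt this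
  · -- X 0 ∈ span
    rw [hcoe]
    exact Stmt6Aux.X0_mem_span hk
  · -- X 1 ∈ span
    rw [hcoe]
    exact Stmt6Aux.X1_mem_span hk
  · -- reduced GB
    intro m
    refine ⟨by rw [hcoe]; exact Stmt6Aux.gb_XY hk m, ?_, ?_⟩
    · intro g hg
      rcases Finset.mem_insert.mp hg with rfl | hg
      · rw [Stmt6Aux.lm_X]
        simp
      · rw [Finset.mem_singleton] at hg
        subst hg
        rw [Stmt6Aux.lm_X]
        simp
    · intro g hg g' hg' hne s hs
      have hg2 : g = X 0 ∨ g = X 1 := by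
        rcases Finset.mem_insert.mp hg with h | h
        · exact Or.inl h
        · exact Or.inr (Finset.mem_singleton.mp h)
      have hg'2 : g' = X 0 ∨ g' = X 1 := by
        rcases Finset.mem_insert.mp hg' with h | h
        · exact Or.inl h
        · exact Or.inr (Finset.mem_singleton.mp h)
      rcases hg2 with rfl | rfl <;> rcases hg'2 with rfl | rfl
      · exact absurd rfl hne
      · rw [support_X, Finset.mem_singleton] at hs
        subst hs
        rw [Stmt6Aux.lm_X]
        intro hcon
        simpa using Finsupp.le_def.mp hcon 1
      · rw [support_X, Finset.mem_singleton] at hs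
        subst hs
        rw [Stmt6Aux.lm_X]
        intro hcon
        simpa using Finsupp.le_def.mp hcon 0
      · exact absurd rfl hne
  · -- X 0 ∉ V Fk k
    intro h
    rw [hFk] at h
    exact Stmt6Aux.X0_not_mem_W hk (Stmt6Aux.V_le_W hk h)
  · -- X 1 ∉ V Fk k
    intro h
    rw [hFk] at h
    exact Stmt6Aux.X1_not_mem_W hk (Stmt6Aux.V_le_W hk h)
  · -- X 0 ∈ V Fk (k+1)
    rw [hFk]
    exact hxV
  · -- X 1 ∈ V Fk (k+1)
    rw [hFk]
    exact hyV
  · -- the optimality statement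
    intro m hm
    constructor
    · refine ⟨{X 0, X 1}, ?_, ?_⟩
      · intro g hg
        rcases Finset.mem_insert.mp hg with rfl | hg
        · rw [hFk]; exact hxV
        · rw [Finset.mem_singleton] at hg
          subst hg
          rw [hFk]; exact hyV
      · rw [hcoe]
        exact Stmt6Aux.gb_XY hk m
    · rintro e ⟨G, hGV, hGB⟩
      rw [hcoe] at hGB
      refine Stmt6Aux.lower_bound hk m hm G ?_ hGB
      intro g hg
      have := hGV g hg
      rwa [hFk] at this
end
end

section
/- Let F = {f_1,...,f_k} ⊆ K[x_1,...,x_n] be a finite family of polynomials. Then the last fall degree satisfies Lfd(F) ≤ max{d_reg(F) + 1, deg(f_1), ..., deg(f_k)}. -/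
open MvPolynomial

noncomputable section

namespace Stmt10Aux

variable {n : ℕ} {K : Type*} [Field K]

lemma mdeg_degree (s : Fin n →₀ ℕ) : mdeg s = s.degree := by
  rw [mdeg, Finsupp.degree, Finsupp.sum]; rfl

lemma mdeg_add (s t : Fin n →₀ ℕ) : mdeg (s + t) = mdeg s + mdeg t := by
  simp only [mdeg_degree, Finsupp.degree_eq_weight_one]
  exact map_add _ _ _

@[simp] lemma mdeg_zero : mdeg (0 : Fin n →₀ ℕ) = 0 := by
  simp [mdeg]

lemma mdeg_eq_zero_iff (s : Fin n →₀ ℕ) : mdeg s = 0 ↔ s = 0 := by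
  rw [mdeg_degree]; exact Finsupp.degree_eq_zero_iff s

lemma mdeg_tsub {s t : Fin n →₀ ℕ} (h : t ≤ s) : mdeg (s - t) = mdeg s - mdeg t := by
  have : (s - t) + t = s := tsub_add_cancel_of_le h
  have h2 := mdeg_add (s - t) t
  rw [this] at h2
  omega

lemma totalDegree_monomial_one_mul (t : Fin n →₀ ℕ) (f : MvPolynomial (Fin n) K) (hf : f ≠ 0) :
    (monomial t (1 : K) * f).totalDegree = mdeg t + f.totalDegree := by
  apply le_antisymm
  · refine (totalDegree_mul _ _).trans ?_
    rw [totalDegree_monomial t (one_ne_zero : (1:K) ≠ 0)]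
    rfl
  · obtain ⟨s, hs, hsup⟩ := Finset.exists_mem_eq_sup f.support
      (support_nonempty.2 hf) (fun s => s.sum fun _ e => e)
    have hc : coeff (t + s) (monomial t (1:K) * f) ≠ 0 := by
      rw [coeff_monomial_mul, one_mul]
      exact mem_support_iff.mp hs
    have := le_totalDegree (mem_support_iff.mpr hc)
    calc mdeg t + f.totalDegree = mdeg (t + s) := by
          rw [mdeg_add, totalDegree, hsup]; rfl
      _ ≤ _ := this

lemma degdrop {P : MvPolynomial (Fin n) K} {m : ℕ} (h1 : P.totalDegree ≤ m)
    (h2 : homogeneousComponent m P = 0) : P.totalDegree ≤ m - 1 := by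
  rw [totalDegree]
  apply Finset.sup_le
  intro s hs
  have hle : mdeg s ≤ m := le_trans (le_totalDegree hs) h1
  rcases lt_or_eq_of_le hle with h | h
  · show mdeg s ≤ m - 1
    omega
  · exfalso
    have := coeff_homogeneousComponent (φ := P) m s
    rw [h2, ← mdeg_degree, h, if_pos rfl] at this
    exact mem_support_iff.mp hs this.symm

lemma topPart_isHomogeneous (f : MvPolynomial (Fin n) K) :
    (topPart f).IsHomogeneous f.totalDegree := homogeneousComponent_isHomogeneous _ _

lemma topPart_ne_zero {f : MvPolynomial (Fin n) K} (hf : f ≠ 0) : topPart f ≠ 0 := by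
  obtain ⟨s, hs, hsup⟩ := Finset.exists_mem_eq_sup f.support
    (support_nonempty.2 hf) (fun s => s.sum fun _ e => e)
  intro h0
  have h0' : homogeneousComponent f.totalDegree f = 0 := h0
  have := coeff_homogeneousComponent (φ := f) f.totalDegree s
  rw [← mdeg_degree] at this
  have hd : mdeg s = f.totalDegree := by rw [totalDegree, hsup]; rfl
  rw [h0', hd, if_pos rfl] at this
  exact mem_support_iff.mp hs this.symm

lemma totalDegree_homogeneousComponent_le (m : ℕ) (f : MvPolynomial (Fin n) K) :
    (homogeneousComponent m f).totalDegree ≤ m := by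
  rw [totalDegree]
  apply Finset.sup_le
  intro s hs
  have := coeff_homogeneousComponent (φ := f) m s
  rw [← mdeg_degree] at this
  by_cases hd : mdeg s = m
  · exact le_of_eq hd
  · rw [if_neg hd] at this
    exact absurd this (mem_support_iff.mp hs)

lemma homogeneousComponent_topPart (f : MvPolynomial (Fin n) K) :
    homogeneousComponent f.totalDegree (topPart f) = topPart f := by
  have := homogeneousComponent_of_mem (m := f.totalDegree)
    (homogeneousComponent_mem f.totalDegree f)
  rw [if_pos rfl] at this
  exact this

lemma totalDegree_neg' (f : MvPolynomial (Fin n) K) : (-f).totalDegree = f.totalDegree := by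
  unfold totalDegree
  rw [support_neg]

lemma totalDegree_sub_le (f g : MvPolynomial (Fin n) K) :
    (f - g).totalDegree ≤ max f.totalDegree g.totalDegree := by
  rw [sub_eq_add_neg]
  refine (totalDegree_add _ _).trans ?_
  rw [totalDegree_neg']

lemma sub_topPart_degree (f : MvPolynomial (Fin n) K) :
    (f - topPart f).totalDegree ≤ f.totalDegree - 1 := by
  apply degdrop
  · refine (totalDegree_sub_le _ _).trans ?_
    rw [max_eq_left]
    exact totalDegree_homogeneousComponent_le _ _
  · rw [map_sub, homogeneousComponent_topPart]
    rw [topPart]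
    exact sub_self _

lemma topPart_degree_le (f : MvPolynomial (Fin n) K) : (topPart f).totalDegree ≤ f.totalDegree :=
  totalDegree_homogeneousComponent_le _ _

-- COMP-MUL
lemma homogeneousComponent_mul_homogeneous {T : MvPolynomial (Fin n) K} {dT : ℕ}
    (hT : T.IsHomogeneous dT) (r : MvPolynomial (Fin n) K) (m : ℕ) :
    homogeneousComponent m (r * T) =
      if dT ≤ m then homogeneousComponent (m - dT) r * T else 0 := by
  conv_lhs => rw [← sum_homogeneousComponent r, Finset.sum_mul, map_sum]
  have step : ∀ i, homogeneousComponent m (homogeneousComponent i r * T) =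
      if m = i + dT then homogeneousComponent i r * T else 0 := by
    intro i
    apply homogeneousComponent_of_mem
    exact (homogeneousComponent_isHomogeneous i r).mul hT
  simp_rw [step]
  by_cases hdm : dT ≤ m
  · rw [if_pos hdm]
    have : ∀ i ∈ Finset.range (r.totalDegree + 1),
        (if m = i + dT then homogeneousComponent i r * T else 0) =
        (if i = m - dT then homogeneousComponent i r * T else 0) := by
      intro i _
      congr 1
      simp only [eq_iff_iff]
      omega
    rw [Finset.sum_congr rfl this, Finset.sum_ite_eq' (Finset.range (r.totalDegree + 1))]
    by_cases hmem : m - dT ∈ Finset.range (r.totalDegree + 1)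
    · rw [if_pos hmem]
    · rw [if_neg hmem]
      have : homogeneousComponent (m - dT) r = 0 := by
        apply homogeneousComponent_eq_zero
        simp only [Finset.mem_range] at hmem
        omega
      rw [this, zero_mul]
  · rw [if_neg hdm]
    apply Finset.sum_eq_zero
    intro i _
    rw [if_neg (by omega)]

-- COMP-SHIFT
lemma homogeneousComponent_monomial_mul {t : Fin n →₀ ℕ} {c : K} (f : MvPolynomial (Fin n) K)
    (m : ℕ) (h : mdeg t ≤ m) :
    homogeneousComponent m (monomial t c * f) =
      monomial t c * homogeneousComponent (m - mdeg t) f := by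
  rw [mul_comm, homogeneousComponent_mul_homogeneous
    (isHomogeneous_monomial c (mdeg_degree t).symm) f m, if_pos h, mul_comm]

section L

/-- Generators of the Macaulay span in degree `≤ D`. -/
def Lset (F : Finset (MvPolynomial (Fin n) K)) (D : ℕ) : Set (MvPolynomial (Fin n) K) :=
  {x | ∃ f ∈ F, ∃ t : Fin n →₀ ℕ, x = monomial t (1 : K) * f ∧ x.totalDegree ≤ D}

def L (F : Finset (MvPolynomial (Fin n) K)) (D : ℕ) : Submodule K (MvPolynomial (Fin n) K) :=
  Submodule.span K (Lset F D)

variable {F : Finset (MvPolynomial (Fin n) K)}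

lemma L_mono {D D' : ℕ} (h : D ≤ D') : L F D ≤ L F D' := by
  apply Submodule.span_mono
  rintro x ⟨f, hf, t, rfl, hdeg⟩
  exact ⟨f, hf, t, rfl, hdeg.trans h⟩

lemma L_le_ideal (D : ℕ) : (L F D : Set (MvPolynomial (Fin n) K)) ⊆
    (Ideal.span (F : Set (MvPolynomial (Fin n) K)) : Set (MvPolynomial (Fin n) K)) := by
  have : L F D ≤ (Ideal.span (F : Set (MvPolynomial (Fin n) K))).restrictScalars K := by
    apply Submodule.span_le.mpr
    rintro x ⟨f, hf, t, rfl, -⟩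
    exact Ideal.mul_mem_left _ _ (Ideal.subset_span hf)
  exact this

lemma L_memF {f : MvPolynomial (Fin n) K} (hf : f ∈ F) : f ∈ L F f.totalDegree :=
  Submodule.subset_span ⟨f, hf, 0,
    (by rw [monomial_zero', C_1, one_mul] : (monomial 0 (1:K)) * f = f).symm, le_rfl⟩

lemma L_deg_le {D : ℕ} {x : MvPolynomial (Fin n) K} (hx : x ∈ L F D) : x.totalDegree ≤ D := by
  induction hx using Submodule.span_induction with
  | mem x h => obtain ⟨f, hf, t, rfl, hdeg⟩ := h; exact hdeg
  | zero => simp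
  | add x y _ _ hx hy => exact (totalDegree_add x y).trans (max_le hx hy)
  | smul c x _ hx => exact (totalDegree_smul_le c x).trans hx

lemma L_shift {D : ℕ} (t : Fin n →₀ ℕ) {x : MvPolynomial (Fin n) K} (hx : x ∈ L F D) :
    monomial t (1 : K) * x ∈ L F (mdeg t + D) := by
  have : L F D ≤ Submodule.comap (LinearMap.mulLeft K (monomial t (1:K))) (L F (mdeg t + D)) := by
    apply Submodule.span_le.mpr
    rintro x ⟨f, hf, u, rfl, hdeg⟩
    simp only [SetLike.mem_coe, Submodule.mem_comap, LinearMap.mulLeft_apply]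
    rcases eq_or_ne f 0 with rfl | hf0
    · rw [mul_zero, mul_zero]; exact Submodule.zero_mem _
    · apply Submodule.subset_span
      refine ⟨f, hf, t + u, by rw [← mul_assoc, monomial_mul, mul_one], ?_⟩
      rw [totalDegree_monomial_one_mul _ _ hf0] at hdeg
      rw [← mul_assoc, monomial_mul, mul_one, totalDegree_monomial_one_mul _ _ hf0, mdeg_add]
      omega
  exact this hx

lemma L_mul {D : ℕ} (r : MvPolynomial (Fin n) K) {x : MvPolynomial (Fin n) K} (hx : x ∈ L F D) :
    r * x ∈ L F (r.totalDegree + D) := by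
  have hrx : r * x = ∑ M ∈ r.support, monomial M (coeff M r) * x := by
    rw [← Finset.sum_mul, ← MvPolynomial.as_sum]
  rw [hrx]
  apply Submodule.sum_mem
  intro M hM
  have h1 : monomial M (coeff M r) * x = coeff M r • (monomial M (1:K) * x) := by
    rw [← smul_mul_assoc, MvPolynomial.smul_monomial, smul_eq_mul, mul_one]
  rw [h1]
  apply Submodule.smul_mem
  have := L_shift M hx
  exact L_mono (by have := le_totalDegree hM; change mdeg M ≤ _ at this; omega) this

end L

section Vlem
variable {F : Finset (MvPolynomial (Fin n) K)}

lemma V_mem_F {c : ℕ} {f : MvPolynomial (Fin n) K} (hf : f ∈ F) (hdeg : f.totalDegree ≤ c) :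
    f ∈ V F c := by
  rw [V, Submodule.mem_sInf]
  intro W hW
  exact hW.1 f hf hdeg

lemma V_mul {c : ℕ} (s : Fin n →₀ ℕ) {f : MvPolynomial (Fin n) K} (hf : f ∈ V F c)
    (hdeg : (monomial s (1 : K) * f).totalDegree ≤ c) : monomial s (1 : K) * f ∈ V F c := by
  rw [V, Submodule.mem_sInf]
  intro W hW
  rw [V, Submodule.mem_sInf] at hf
  exact hW.2 s f (hf W hW) hdeg

lemma V_mono {c c' : ℕ} (h : c ≤ c') : V F c ≤ V F c' := by
  have : V F c' ∈ {W : Submodule K (MvPolynomial (Fin n) K) |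
      (∀ f ∈ F, f.totalDegree ≤ c → f ∈ W) ∧
      ∀ (s : Fin n →₀ ℕ), ∀ f ∈ W,
        (monomial s (1 : K) * f).totalDegree ≤ c → monomial s (1 : K) * f ∈ W} := by
    constructor
    · exact fun f hf hd => V_mem_F hf (hd.trans h)
    · exact fun s f hf hd => V_mul s hf (hd.trans h)
  exact sInf_le this

lemma L_le_V (c : ℕ) : L F c ≤ V F c := by
  apply Submodule.span_le.mpr
  rintro x ⟨f, hf, t, rfl, hdeg⟩
  rcases eq_or_ne f 0 with rfl | hf0
  · rw [mul_zero]; exact Submodule.zero_mem _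
  · have hdf : f.totalDegree ≤ c := by
      rw [totalDegree_monomial_one_mul _ _ hf0] at hdeg; omega
    exact V_mul t (V_mem_F hf hdf) hdeg

end Vlem
lemma isHomogeneous_coeff {p : MvPolynomial (Fin n) K} {m : ℕ} (hp : p.IsHomogeneous m)
    {M : Fin n →₀ ℕ} (hM : M ∈ p.support) : mdeg M = m := by
  rw [mdeg_degree, Finsupp.degree_eq_weight_one]
  exact hp (mem_support_iff.mp hM)

lemma exists_le_mdeg : ∀ (m : ℕ) (M : Fin n →₀ ℕ), mdeg M ≤ m+1 → True := fun _ _ _ => trivial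

lemma exists_sub : ∀ (m : ℕ) (M : Fin n →₀ ℕ), mdeg M = m → ∀ d, d ≤ m →
    ∃ s, s ≤ M ∧ mdeg s = d := by
  intro m
  induction m with
  | zero =>
    intro M hM d hd
    refine ⟨0, zero_le, ?_⟩
    simp only [Nat.le_zero] at hd
    simp [mdeg, hd]
  | succ k ih =>
    intro M hM d hd
    rcases eq_or_lt_of_le hd with rfl | hlt
    · exact ⟨M, le_rfl, hM⟩
    · have hM0 : M ≠ 0 := by
        intro h; rw [h] at hM; simp [mdeg] at hM
      obtain ⟨j, hj⟩ := Finsupp.support_nonempty_iff.2 hM0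
      have hsle : Finsupp.single j 1 ≤ M := by
        rw [Finsupp.single_le_iff]
        exact Nat.one_le_iff_ne_zero.2 (Finsupp.mem_support_iff.mp hj)
      have hmd : mdeg (M - Finsupp.single j 1) = k := by
        rw [mdeg_tsub hsle, hM]
        simp [mdeg, Finsupp.sum_single_index]
      obtain ⟨s, hs1, hs2⟩ := ih (M - Finsupp.single j 1) hmd d (by omega)
      exact ⟨s, hs1.trans tsub_le_self, hs2⟩

/-- REWRITE: any homogeneous polynomial of degree `≥ d` is the `D`-th homogeneous component
of an element of `L F m`. -/
lemma rewrite_lemma {F : Finset (MvPolynomial (Fin n) K)} {d : ℕ} (hreg : regAt F d)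
    {m : ℕ} (hm : d ≤ m) {p : MvPolynomial (Fin n) K} (hp : p.IsHomogeneous m) :
    ∃ l, l ∈ L F m ∧ homogeneousComponent m l = p := by
  -- Step A : p is in the ideal of top parts
  have hpI : p ∈ Ideal.span (topPart '' (F : Set (MvPolynomial (Fin n) K))) := by
    rcases eq_or_lt_of_le hm with rfl | hlt
    · exact hreg p hp
    · rw [MvPolynomial.as_sum p]
      apply Submodule.sum_mem
      intro M hM
      have hMd : mdeg M = m := isHomogeneous_coeff hp hM
      obtain ⟨s, hsle, hsd⟩ := exists_sub m M hMd d (le_of_lt hlt)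
      have : monomial M (coeff M p) = monomial (M - s) (coeff M p) * monomial s (1:K) := by
        rw [monomial_mul, mul_one, tsub_add_cancel_of_le hsle]
      rw [this]
      exact Ideal.mul_mem_left _ _
        (hreg (monomial s 1) (isHomogeneous_monomial 1 (by rw [← mdeg_degree, hsd])))
  -- Step B : extract a representation
  rw [Ideal.span, Submodule.mem_span_set] at hpI
  obtain ⟨c, hsupp, hsum⟩ := hpI
  have hex : ∀ g ∈ c.support, ∃ f, f ∈ F ∧ topPart f = g := by
    intro g hg
    obtain ⟨f, hf, hfg⟩ := hsupp hg
    exact ⟨f, hf, hfg⟩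
  choose fch hfchF hfchtop using hex
  refine ⟨∑ g ∈ c.support.attach,
    if (fch g.1 g.2).totalDegree ≤ m then
      homogeneousComponent (m - (fch g.1 g.2).totalDegree) (c g.1) * fch g.1 g.2
    else 0, ?_, ?_⟩
  · apply Submodule.sum_mem
    rintro ⟨g, hg⟩ -
    dsimp only
    split_ifs with hdg
    · have h1 : fch g hg ∈ L F (fch g hg).totalDegree := L_memF (hfchF g hg)
      have h2 := L_mul (homogeneousComponent (m - (fch g hg).totalDegree) (c g)) h1
      refine L_mono ?_ h2
      have := totalDegree_homogeneousComponent_le (m - (fch g hg).totalDegree) (c g)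
      omega
    · exact Submodule.zero_mem _
  · rw [map_sum]
    have key : ∀ g : {x // x ∈ c.support},
        homogeneousComponent m (if (fch g.1 g.2).totalDegree ≤ m then
          homogeneousComponent (m - (fch g.1 g.2).totalDegree) (c g.1) * fch g.1 g.2
        else 0) = homogeneousComponent m (c g.1 * g.1) := by
      rintro ⟨g, hg⟩
      dsimp only
      have hgtop : (topPart (fch g hg)).IsHomogeneous (fch g hg).totalDegree :=
        topPart_isHomogeneous _
      rw [hfchtop g hg] at hgtop
      split_ifs with hdg
      · have harith : m - (m - (fch g hg).totalDegree) = (fch g hg).totalDegree := by omega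
        have hL : homogeneousComponent m
            (homogeneousComponent (m - (fch g hg).totalDegree) (c g) * fch g hg)
            = g * homogeneousComponent (m - (fch g hg).totalDegree) (c g) := by
          rw [mul_comm, homogeneousComponent_mul_homogeneous (homogeneousComponent_isHomogeneous _ _) (fch g hg) m,
            if_pos (Nat.sub_le m _), harith, ← topPart, hfchtop g hg]
        have hR : homogeneousComponent m (c g * g)
            = homogeneousComponent (m - (fch g hg).totalDegree) (c g) * g := by
          rw [homogeneousComponent_mul_homogeneous hgtop, if_pos hdg]
        rw [hL, hR, mul_comm]
      · rw [map_zero, homogeneousComponent_mul_homogeneous hgtop, if_neg hdg]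
    rw [Finset.sum_congr rfl (fun g _ => key g)]
    have : ∑ g ∈ c.support.attach, homogeneousComponent m (c g.1 * g.1)
        = homogeneousComponent m p := by
      rw [← map_sum, ← hsum, Finsupp.sum]
      congr 1
      rw [Finset.sum_attach c.support (fun g => c g * g)]
      exact Finset.sum_congr rfl (fun g _ => (smul_eq_mul ..).symm)
    rw [this]
    have h2 := homogeneousComponent_of_mem (m := m) ((mem_homogeneousSubmodule _ _).mpr hp)
    rw [if_pos rfl] at h2
    exact h2
section Psiq
variable (sq : (Fin n →₀ ℕ) → (Fin n →₀ ℕ)) (q : (Fin n →₀ ℕ) → MvPolynomial (Fin n) K)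

/-- canonical rewriting of a polynomial in terms of the `q`-family. -/
def psiq (p : MvPolynomial (Fin n) K) : MvPolynomial (Fin n) K :=
  Finsupp.sum (AddMonoidAlgebra.coeff p) fun M c => monomial (M - sq M) c * q (sq M)

lemma psiq_add (p1 p2 : MvPolynomial (Fin n) K) :
    psiq sq q (p1 + p2) = psiq sq q p1 + psiq sq q p2 := by
  unfold psiq
  rw [AddMonoidAlgebra.coeff_add]
  apply Finsupp.sum_add_index'
  · intro M; rw [monomial_zero, zero_mul]
  · intro M c1 c2; rw [map_add, add_mul]

lemma psiq_smul (k : K) (p : MvPolynomial (Fin n) K) :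
    psiq sq q (k • p) = k • psiq sq q p := by
  unfold psiq
  rw [AddMonoidAlgebra.coeff_smul, Finsupp.sum_smul_index' (fun M => by rw [monomial_zero, zero_mul]), Finsupp.smul_sum]
  apply Finsupp.sum_congr
  intro M _
  rw [← smul_monomial, smul_mul_assoc]

/-- `psiq` as a linear map. -/
def psiqL : MvPolynomial (Fin n) K →ₗ[K] MvPolynomial (Fin n) K where
  toFun := psiq sq q
  map_add' := psiq_add sq q
  map_smul' := psiq_smul sq q

lemma psiqL_apply (p : MvPolynomial (Fin n) K) : psiqL sq q p = psiq sq q p := rfl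

lemma psiq_monomial (M : Fin n →₀ ℕ) (c : K) :
    psiq sq q (monomial M c) = monomial (M - sq M) c * q (sq M) := by
  unfold psiq
  rw [← single_eq_monomial, AddMonoidAlgebra.coeff_single]
  exact Finsupp.sum_single_index (by rw [monomial_zero, zero_mul])

end Psiq

section Pair
variable (q : (Fin n →₀ ℕ) → MvPolynomial (Fin n) K) (d : ℕ)

/-- The "taxicab move" generators used to decompose monomial syzygies. -/
def PairSet (c : ℕ) : Set (MvPolynomial (Fin n) K) :=
  {x | ∃ (j : Fin n) (u u' s1 s2 : Fin n →₀ ℕ), mdeg s1 = d ∧ mdeg s2 = d ∧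
    u + s1 = u' + s2 ∧ mdeg u + d + 1 = c ∧
    x = monomial (Finsupp.single j 1) 1 * (monomial u 1 * q s1 - monomial u' 1 * q s2)}

lemma pair_basic {c : ℕ} {M s1 s2 : Fin n →₀ ℕ} (j : Fin n)
    (hM : mdeg M = c) (hs1 : s1 ≤ M) (hs2 : s2 ≤ M) (hd1 : mdeg s1 = d) (hd2 : mdeg s2 = d)
    (hj1 : Finsupp.single j 1 ≤ M - s1) (hj2 : Finsupp.single j 1 ≤ M - s2)
    (hc : d + 1 ≤ c) :
    monomial (M - s1) (1:K) * q s1 - monomial (M - s2) 1 * q s2 ∈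
      Submodule.span K (PairSet q d c) := by
  apply Submodule.subset_span
  refine ⟨j, M - s1 - Finsupp.single j 1, M - s2 - Finsupp.single j 1, s1, s2, hd1, hd2, ?_, ?_, ?_⟩
  · -- (M - s1 - e j) + s1 = (M - s2 - e j) + s2
    ext i
    have h1 := Finsupp.le_def.mp hs1 i
    have h2 := Finsupp.le_def.mp hs2 i
    have h3 := Finsupp.le_def.mp hj1 i
    have h4 := Finsupp.le_def.mp hj2 i
    simp only [Finsupp.add_apply, Finsupp.tsub_apply] at *
    omega
  · -- degree bookkeeping
    have hsub : mdeg (M - s1 - Finsupp.single j 1) =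
        mdeg (M - s1) - mdeg (Finsupp.single j 1) := mdeg_tsub hj1
    have h5 : mdeg (M - s1) = c - d := by rw [mdeg_tsub hs1, hM, hd1]
    have h6 : mdeg (Finsupp.single j (1:ℕ)) = 1 := by
      simp [mdeg, Finsupp.sum_single_index]
    have h7 : (1:ℕ) ≤ mdeg (M - s1) := by
      calc (1:ℕ) = mdeg (Finsupp.single j (1:ℕ)) := h6.symm
        _ ≤ mdeg (M - s1) := by
            have := mdeg_add (M - s1 - Finsupp.single j 1) (Finsupp.single j (1:ℕ))
            rw [tsub_add_cancel_of_le hj1] at this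
            omega
    omega
  · -- the element form
    have e1 : monomial (M - s1) (1:K) =
        monomial (Finsupp.single j 1) 1 * monomial (M - s1 - Finsupp.single j 1) 1 := by
      rw [monomial_mul, one_mul, add_tsub_cancel_of_le hj1]
    have e2 : monomial (M - s2) (1:K) =
        monomial (Finsupp.single j 1) 1 * monomial (M - s2 - Finsupp.single j 1) 1 := by
      rw [monomial_mul, one_mul, add_tsub_cancel_of_le hj2]
    rw [mul_sub, ← mul_assoc, ← mul_assoc, ← e1, ← e2]

lemma move {c : ℕ} (hc : d + 2 ≤ c) {M s1 s2 : Fin n →₀ ℕ} (hM : mdeg M = c)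
    (hs1 : s1 ≤ M) (hs2 : s2 ≤ M) (hd1 : mdeg s1 = d) (hd2 : mdeg s2 = d) :
    monomial (M - s1) (1:K) * q s1 - monomial (M - s2) 1 * q s2 ∈
      Submodule.span K (PairSet q d c) := by
  have hdc : d + 1 ≤ c := by omega
  have hmd1 : mdeg (M - s1) = c - d := by rw [mdeg_tsub hs1, hM, hd1]
  have hmd2 : mdeg (M - s2) = c - d := by rw [mdeg_tsub hs2, hM, hd2]
  have hne1 : M - s1 ≠ 0 := by
    intro h; rw [h, mdeg_zero] at hmd1; omega
  have hne2 : M - s2 ≠ 0 := by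
    intro h; rw [h, mdeg_zero] at hmd2; omega
  obtain ⟨j, hj⟩ := Finsupp.support_nonempty_iff.2 hne1
  obtain ⟨l, hl⟩ := Finsupp.support_nonempty_iff.2 hne2
  have hj1 : Finsupp.single j 1 ≤ M - s1 :=
    Finsupp.single_le_iff.mpr (Nat.one_le_iff_ne_zero.2 (Finsupp.mem_support_iff.mp hj))
  have hl2 : Finsupp.single l 1 ≤ M - s2 :=
    Finsupp.single_le_iff.mpr (Nat.one_le_iff_ne_zero.2 (Finsupp.mem_support_iff.mp hl))
  by_cases hcase : Finsupp.single j 1 ≤ M - s2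
  · exact pair_basic q d j hM hs1 hs2 hd1 hd2 hj1 hcase hdc
  · have hjl : j ≠ l := by
      intro h; rw [h] at hcase; exact hcase hl2
    -- pointwise facts
    have hMj : 1 ≤ M j := by
      have := Finsupp.le_def.mp hj1 j
      have h2 := Finsupp.le_def.mp (tsub_le_self : M - s1 ≤ M) j
      simp only [Finsupp.single_eq_same] at this
      omega
    have hMl : 1 ≤ M l := by
      have := Finsupp.le_def.mp hl2 l
      have h2 := Finsupp.le_def.mp (tsub_le_self : M - s2 ≤ M) l
      simp only [Finsupp.single_eq_same] at this
      omega
    have hjM : Finsupp.single j 1 ≤ M := hj1.trans tsub_le_self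
    have hlMj : Finsupp.single l 1 ≤ M - Finsupp.single j 1 := by
      rw [Finsupp.single_le_iff, Finsupp.tsub_apply, Finsupp.single_apply, if_neg hjl]
      omega
    have hmdM' : mdeg (M - Finsupp.single j 1 - Finsupp.single l 1) = c - 2 := by
      have hsj : mdeg (Finsupp.single j (1:ℕ)) = 1 := by simp [mdeg, Finsupp.sum_single_index]
      have hsl : mdeg (Finsupp.single l (1:ℕ)) = 1 := by simp [mdeg, Finsupp.sum_single_index]
      rw [mdeg_tsub hlMj, mdeg_tsub hjM, hM, hsj, hsl]
      omega
    obtain ⟨s3, hs3le, hs3d⟩ := exists_sub (c-2) _ hmdM' d (by omega)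
    have hs3M : s3 ≤ M := hs3le.trans (tsub_le_self.trans tsub_le_self)
    have hs3j : s3 j ≤ M j - 1 := by
      have := Finsupp.le_def.mp hs3le j
      rw [Finsupp.tsub_apply, Finsupp.tsub_apply, Finsupp.single_eq_same,
        Finsupp.single_apply, if_neg (Ne.symm hjl)] at this
      omega
    have hs3l : s3 l ≤ M l - 1 := by
      have := Finsupp.le_def.mp hs3le l
      rw [Finsupp.tsub_apply, Finsupp.tsub_apply, Finsupp.single_eq_same,
        Finsupp.single_apply, if_neg hjl] at this
      omega
    have hj3 : Finsupp.single j 1 ≤ M - s3 := by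
      rw [Finsupp.single_le_iff, Finsupp.tsub_apply]; omega
    have hl3 : Finsupp.single l 1 ≤ M - s3 := by
      rw [Finsupp.single_le_iff, Finsupp.tsub_apply]; omega
    have hsplit : monomial (M - s1) (1:K) * q s1 - monomial (M - s2) 1 * q s2 =
        (monomial (M - s1) (1:K) * q s1 - monomial (M - s3) 1 * q s3) +
        (monomial (M - s3) (1:K) * q s3 - monomial (M - s2) 1 * q s2) := by ring
    rw [hsplit]
    exact Submodule.add_mem _
      (pair_basic q d j hM hs1 hs3M hd1 hs3d hj1 hj3 hdc)
      (pair_basic q d l hM hs3M hs2 hs3d hd2 hl3 hl2 hdc)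

end Pair

section Commute
variable (sq : (Fin n →₀ ℕ) → (Fin n →₀ ℕ)) (q : (Fin n →₀ ℕ) → MvPolynomial (Fin n) K) (d : ℕ)

lemma commute_lemma {c : ℕ} (hc : d + 2 ≤ c)
    (hsq : ∀ M : Fin n →₀ ℕ, d ≤ mdeg M → sq M ≤ M ∧ mdeg (sq M) = d)
    (j : Fin n) {P : MvPolynomial (Fin n) K} (hP : ∀ M ∈ P.support, mdeg M = c - 1) :
    monomial (Finsupp.single j 1) 1 * psiq sq q P -
      psiq sq q (monomial (Finsupp.single j 1) 1 * P) ∈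
      Submodule.span K (PairSet q d c) := by
  have key : ∀ M ∈ P.support,
      monomial (Finsupp.single j 1) (1:K) * psiq sq q (monomial M (coeff M P)) -
        psiq sq q (monomial (Finsupp.single j 1) 1 * monomial M (coeff M P)) ∈
        Submodule.span K (PairSet q d c) := by
    intro M hM
    have hMdeg : mdeg M = c - 1 := hP M hM
    have hMd : d ≤ mdeg M := by omega
    obtain ⟨hsqle, hsqd⟩ := hsq M hMd
    have hbigdeg : mdeg (Finsupp.single j 1 + M) = c := by
      have hsj : mdeg (Finsupp.single j (1:ℕ)) = 1 := by simp [mdeg, Finsupp.sum_single_index]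
      rw [mdeg_add, hsj, hMdeg]; omega
    obtain ⟨hsqle', hsqd'⟩ := hsq (Finsupp.single j 1 + M) (by omega)
    rw [psiq_monomial]
    have e1 : monomial (Finsupp.single j 1) (1:K) * monomial M (coeff M P)
        = monomial (Finsupp.single j 1 + M) (coeff M P) := by
      rw [monomial_mul, one_mul]
    rw [e1, psiq_monomial]
    have e2 : monomial (Finsupp.single j 1) (1:K) *
        (monomial (M - sq M) (coeff M P) * q (sq M)) =
        monomial (Finsupp.single j 1 + M - sq M) (coeff M P) * q (sq M) := by
      rw [← mul_assoc, monomial_mul, one_mul, add_tsub_assoc_of_le hsqle]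
    rw [e2]
    have e3 : ∀ (u : Fin n →₀ ℕ) (x : MvPolynomial (Fin n) K),
        monomial u (coeff M P) * x = coeff M P • (monomial u (1:K) * x) := by
      intro u x
      rw [← smul_mul_assoc, smul_monomial, smul_eq_mul, mul_one]
    rw [e3, e3, ← smul_sub]
    apply Submodule.smul_mem
    exact move q d hc hbigdeg (hsqle.trans le_add_self) hsqle' hsqd hsqd'
  -- sum up via a bundled linear map
  set Φ : MvPolynomial (Fin n) K →ₗ[K] MvPolynomial (Fin n) K :=
    (LinearMap.mulLeft K (monomial (Finsupp.single j 1) (1:K))) ∘ₗ psiqL sq q -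
      psiqL sq q ∘ₗ (LinearMap.mulLeft K (monomial (Finsupp.single j 1) (1:K))) with hΦ
  have hΦapply : ∀ x : MvPolynomial (Fin n) K, Φ x =
      monomial (Finsupp.single j 1) (1:K) * psiq sq q x -
        psiq sq q (monomial (Finsupp.single j 1) 1 * x) := by
    intro x
    simp [hΦ, LinearMap.sub_apply, LinearMap.comp_apply, LinearMap.mulLeft_apply, psiqL]
  rw [← hΦapply]
  rw [MvPolynomial.as_sum P, map_sum]
  apply Submodule.sum_mem
  intro M hM
  rw [hΦapply]
  exact key M hM

end Commute
section Main
variable {F : Finset (MvPolynomial (Fin n) K)} {d : ℕ}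
variable {sq : (Fin n →₀ ℕ) → (Fin n →₀ ℕ)} {q : (Fin n →₀ ℕ) → MvPolynomial (Fin n) K}

/-- Degree bound for the defect of a single `q`. -/
lemma qdiff_deg (hq : ∀ s, mdeg s = d → q s ∈ L F d ∧ (q s).totalDegree ≤ d ∧
      homogeneousComponent d (q s) = monomial s 1)
    {s : Fin n →₀ ℕ} (hs : mdeg s = d) :
    (monomial s (1:K) - q s).totalDegree ≤ d - 1 := by
  obtain ⟨-, hdeg, hcomp⟩ := hq s hs
  apply degdrop
  · refine (totalDegree_sub_le _ _).trans (max_le ?_ hdeg)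
    rw [totalDegree_monomial s (one_ne_zero : (1:K) ≠ 0)]
    exact le_of_eq hs
  · rw [map_sub, hcomp]
    have : homogeneousComponent d (monomial s (1:K)) = monomial s 1 := by
      have := homogeneousComponent_of_mem (m := d)
        ((mem_homogeneousSubmodule _ _).mpr (isHomogeneous_monomial (1:K) (by
          rw [← mdeg_degree, hs])))
      rwa [if_pos rfl] at this
    rw [this, sub_self]

lemma psiq_mem_L (hq : ∀ s, mdeg s = d → q s ∈ L F d ∧ (q s).totalDegree ≤ d ∧
      homogeneousComponent d (q s) = monomial s 1)
    (hsq : ∀ M : Fin n →₀ ℕ, d ≤ mdeg M → sq M ≤ M ∧ mdeg (sq M) = d)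
    {c : ℕ} {P : MvPolynomial (Fin n) K} (hP : ∀ M ∈ P.support, d ≤ mdeg M ∧ mdeg M ≤ c) :
    psiq sq q P ∈ L F c := by
  have : psiq sq q P = psiqL sq q P := (psiqL_apply sq q P).symm
  rw [this, MvPolynomial.as_sum P, map_sum]
  apply Submodule.sum_mem
  intro M hM
  rw [psiqL_apply, psiq_monomial]
  obtain ⟨hd1, hd2⟩ := hP M hM
  obtain ⟨hle, hmd⟩ := hsq M hd1
  have e3 : monomial (M - sq M) (coeff M P) * q (sq M)
      = coeff M P • (monomial (M - sq M) (1:K) * q (sq M)) := by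
    rw [← smul_mul_assoc, smul_monomial, smul_eq_mul, mul_one]
  rw [e3]
  apply Submodule.smul_mem
  have := L_shift (M - sq M) (hq (sq M) hmd).1
  refine L_mono ?_ this
  rw [mdeg_tsub hle, hmd]
  omega

lemma psiq_diff_deg (hq : ∀ s, mdeg s = d → q s ∈ L F d ∧ (q s).totalDegree ≤ d ∧
      homogeneousComponent d (q s) = monomial s 1)
    (hsq : ∀ M : Fin n →₀ ℕ, d ≤ mdeg M → sq M ≤ M ∧ mdeg (sq M) = d)
    (hd1 : 1 ≤ d) {c : ℕ} (hdc : d ≤ c) {P : MvPolynomial (Fin n) K}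
    (hP : ∀ M ∈ P.support, mdeg M = c) :
    (P - psiq sq q P).totalDegree ≤ c - 1 := by
  have key : P - psiq sq q P = ∑ M ∈ P.support,
      (monomial (M - sq M) (coeff M P) * (monomial (sq M) 1 - q (sq M))) := by
    rw [← psiqL_apply]
    conv_lhs => rw [MvPolynomial.as_sum P]
    rw [map_sum, ← Finset.sum_sub_distrib]
    apply Finset.sum_congr rfl
    intro M hM
    rw [psiqL_apply, psiq_monomial, mul_sub, monomial_mul, mul_one,
      tsub_add_cancel_of_le (hsq M (by rw [hP M hM]; omega)).1]
  rw [key]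
  refine (totalDegree_finset_sum _ _).trans (Finset.sup_le ?_)
  intro M hM
  obtain ⟨hle, hmd⟩ := hsq M (by rw [hP M hM]; omega)
  refine (totalDegree_mul _ _).trans ?_
  have h1 : (monomial (M - sq M) (coeff M P)).totalDegree ≤ c - d := by
    rcases eq_or_ne (coeff M P) 0 with h | h
    · rw [h, monomial_zero, totalDegree_zero]; omega
    · rw [totalDegree_monomial _ h]
      show mdeg (M - sq M) ≤ c - d
      rw [mdeg_tsub hle, hmd, hP M hM]
  have h2 := qdiff_deg hq hmd
  omega

end Main
section Main
variable {F : Finset (MvPolynomial (Fin n) K)} {d : ℕ}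

/-- TOPRED : top reduction of ideal elements down to degree `< d`. -/
lemma topred (hreg : regAt F d) (hd1 : 1 ≤ d) :
    ∀ (m : ℕ) (f : MvPolynomial (Fin n) K), f.totalDegree ≤ m →
      f ∈ Ideal.span (F : Set (MvPolynomial (Fin n) K)) →
      ∃ l z, f = l + z ∧ l ∈ L F (max d m) ∧
        z ∈ Ideal.span (F : Set (MvPolynomial (Fin n) K)) ∧ z.totalDegree ≤ d - 1 := by
  intro m
  induction m with
  | zero =>
    intro f hdeg hf
    refine ⟨0, f, by rw [zero_add], Submodule.zero_mem _, hf, by omega⟩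
  | succ m ih =>
    intro f hdeg hf
    by_cases hdm : m + 1 < d
    · exact ⟨0, f, by rw [zero_add], Submodule.zero_mem _, hf, by omega⟩
    · -- d ≤ m + 1
      obtain ⟨l1, hl1L, hl1c⟩ := rewrite_lemma hreg (by omega : d ≤ m + 1)
        (homogeneousComponent_isHomogeneous (m+1) f)
      have hf' : f - l1 ∈ Ideal.span (F : Set (MvPolynomial (Fin n) K)) :=
        Submodule.sub_mem _ hf (L_le_ideal (m+1) hl1L)
      have hdeg' : (f - l1).totalDegree ≤ m := by
        have h1 : (f - l1).totalDegree ≤ m + 1 :=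
          (totalDegree_sub_le f l1).trans (max_le hdeg (L_deg_le hl1L))
        have h2 : homogeneousComponent (m+1) (f - l1) = 0 := by
          rw [map_sub, hl1c, sub_self]
        have := degdrop h1 h2
        omega
      obtain ⟨l2, z, hfz, hl2, hz, hzd⟩ := ih (f - l1) hdeg' hf'
      refine ⟨l1 + l2, z, by rw [add_assoc, ← hfz]; ring, ?_, hz, hzd⟩
      have hmax : max d (m+1) = m + 1 := by omega
      rw [hmax]
      exact Submodule.add_mem _ (hl1L) (L_mono (by omega) hl2)

end Main

section FallSec
variable {F : Finset (MvPolynomial (Fin n) K)} {d e : ℕ}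
variable {sq : (Fin n →₀ ℕ) → (Fin n →₀ ℕ)} {q : (Fin n →₀ ℕ) → MvPolynomial (Fin n) K}

/-- The space of "fallen" elements: elements of the ideal of degree `≤ d` lying in `V F e`. -/
def SS (F : Finset (MvPolynomial (Fin n) K)) (d e : ℕ) : Submodule K (MvPolynomial (Fin n) K) :=
  (V F e ⊓ Submodule.restrictScalars K (Ideal.span (F : Set (MvPolynomial (Fin n) K)))) ⊓
    restrictTotalDegree (Fin n) K d

lemma mem_SS {x : MvPolynomial (Fin n) K} :
    x ∈ SS F d e ↔ x ∈ V F e ∧ x ∈ Ideal.span (F : Set (MvPolynomial (Fin n) K)) ∧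
      x.totalDegree ≤ d := by
  simp only [SS, Submodule.mem_inf, Submodule.restrictScalars_mem, mem_restrictTotalDegree,
    and_assoc]

lemma mdeg_single (j : Fin n) : mdeg (Finsupp.single j (1:ℕ)) = 1 := by
  simp [mdeg, Finsupp.sum_single_index]

lemma psiq_zero : psiq sq q (0 : MvPolynomial (Fin n) K) = 0 := by
  rw [← psiqL_apply, map_zero]

lemma deg_X_mul_le (j : Fin n) (w : MvPolynomial (Fin n) K) :
    (monomial (Finsupp.single j 1) (1:K) * w).totalDegree ≤ 1 + w.totalDegree := by
  refine (totalDegree_mul _ _).trans ?_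
  have h1 : (monomial (Finsupp.single j 1) (1:K)).totalDegree = 1 := by
    rw [totalDegree_monomial _ (one_ne_zero : (1:K) ≠ 0)]
    exact mdeg_single j
  omega

lemma topPart_eq_self_of_deg_zero {f : MvPolynomial (Fin n) K} (hf : f.totalDegree = 0) :
    f - topPart f = 0 := by
  have h1 : f.IsHomogeneous f.totalDegree := by
    rw [hf]
    exact isHomogeneous_of_totalDegree_zero _ hf
  have h2 := homogeneousComponent_of_mem (m := f.totalDegree)
    ((mem_homogeneousSubmodule _ _).mpr h1)
  rw [if_pos rfl] at h2
  rw [topPart, h2, sub_self]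

/-- FALL : the key induction. -/
lemma fall (hreg : regAt F d) (hd1 : 1 ≤ d) (he1 : d + 1 ≤ e) (he2 : F.sup totalDegree ≤ e)
    (hsq : ∀ M : Fin n →₀ ℕ, d ≤ mdeg M → sq M ≤ M ∧ mdeg (sq M) = d)
    (hq : ∀ s, mdeg s = d → q s ∈ L F d ∧ (q s).totalDegree ≤ d ∧
      homogeneousComponent d (q s) = monomial s 1) :
    ∀ D, e + 1 ≤ D → ∀ p ∈ L F D, p.totalDegree ≤ D - 1 → p ∈ SS F d e ⊔ L F (D - 1) := by
  intro D
  induction D using Nat.strong_induction_on with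
  | _ D IH =>
  intro hD p hpL hpd
  -- STEP : multiplying a fallen-or-low element of `L F (D-1)` by a variable
  have step : ∀ w ∈ L F (D-1), w.totalDegree ≤ D - 2 → ∀ j : Fin n,
      monomial (Finsupp.single j 1) (1:K) * w ∈ SS F d e ⊔ L F (D-1) := by
    intro w hw hwd j
    have hXwI : monomial (Finsupp.single j 1) (1:K) * w ∈
        Ideal.span (F : Set (MvPolynomial (Fin n) K)) :=
      Ideal.mul_mem_left _ _ (L_le_ideal (D-1) hw)
    have hXwdeg : (monomial (Finsupp.single j 1) (1:K) * w).totalDegree ≤ D - 1 := by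
      have := deg_X_mul_le j w
      omega
    rcases le_or_gt D (e+1) with hDe | hDe
    · -- base case : D = e + 1
      have hD1e : D - 1 = e := by omega
      have hwV : w ∈ V F e := L_le_V e (by rw [← hD1e]; exact hw)
      have hXwV : monomial (Finsupp.single j 1) (1:K) * w ∈ V F e :=
        V_mul _ hwV (by omega)
      obtain ⟨l, z, hlz, hlL, hzI, hzd⟩ := topred hreg hd1 e
        (monomial (Finsupp.single j 1) (1:K) * w) (by omega) hXwI
      have hmaxde : max d e = e := by omega
      rw [hmaxde] at hlL
      have hzSS : z ∈ SS F d e := by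
        rw [mem_SS]
        refine ⟨?_, hzI, by omega⟩
        have : z = monomial (Finsupp.single j 1) (1:K) * w - l := by
          rw [hlz]; ring
        rw [this]
        exact Submodule.sub_mem _ hXwV (L_le_V e hlL)
      rw [hlz]
      exact Submodule.add_mem _ (Submodule.mem_sup_right (by rw [hD1e]; exact hlL))
        (Submodule.mem_sup_left hzSS)
    · -- recursive case : e + 1 ≤ D - 1
      have hIH := IH (D-1) (by omega) (by omega) w hw (by omega)
      rw [Submodule.mem_sup] at hIH
      obtain ⟨v, hv, l, hl, hvl⟩ := hIH
      rw [mem_SS] at hv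
      obtain ⟨hvV, hvI, hvd⟩ := hv
      have hXv_deg : (monomial (Finsupp.single j 1) (1:K) * v).totalDegree ≤ d + 1 := by
        have := deg_X_mul_le j v; omega
      have hXvV : monomial (Finsupp.single j 1) (1:K) * v ∈ V F e :=
        V_mul _ hvV (by omega)
      have hXvI : monomial (Finsupp.single j 1) (1:K) * v ∈
          Ideal.span (F : Set (MvPolynomial (Fin n) K)) := Ideal.mul_mem_left _ _ hvI
      obtain ⟨l', z', hlz', hl'L, hz'I, hz'd⟩ := topred hreg hd1 (d+1)
        (monomial (Finsupp.single j 1) (1:K) * v) hXv_deg hXvI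
      have hmaxd : max d (d+1) = d + 1 := by omega
      rw [hmaxd] at hl'L
      have hz'SS : z' ∈ SS F d e := by
        rw [mem_SS]
        refine ⟨?_, hz'I, by omega⟩
        have : z' = monomial (Finsupp.single j 1) (1:K) * v - l' := by
          rw [hlz']; ring
        rw [this]
        exact Submodule.sub_mem _ hXvV (V_mono (by omega) (L_le_V (d+1) hl'L))
      have hXl : monomial (Finsupp.single j 1) (1:K) * l ∈ L F (D-1) := by
        have := L_shift (Finsupp.single j 1) hl
        rw [mdeg_single] at this
        exact L_mono (by omega) this
      have hsplit : monomial (Finsupp.single j 1) (1:K) * w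
          = z' + (l' + monomial (Finsupp.single j 1) (1:K) * l) := by
        rw [← hvl] at *
        rw [mul_add, hlz']
        ring
      rw [hsplit]
      exact Submodule.add_mem _ (Submodule.mem_sup_left hz'SS)
        (Submodule.mem_sup_right (Submodule.add_mem _
          (L_mono (by omega) hl'L) hXl))
  -- the pair generators land in the right space
  have pairs : Submodule.span K (PairSet q d D) ≤ SS F d e ⊔ L F (D - 1) := by
    rw [Submodule.span_le]
    rintro x ⟨j, u, u', s1, s2, hs1, hs2, huu, hud, rfl⟩
    have hmdu' : mdeg u' = mdeg u := by
      have h1 := mdeg_add u s1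
      have h2 := mdeg_add u' s2
      rw [huu] at h1
      rw [h1] at h2
      omega
    have hπL : monomial u (1:K) * q s1 - monomial u' 1 * q s2 ∈ L F (D-1) := by
      refine Submodule.sub_mem _ ?_ ?_
      · have := L_shift u (hq s1 hs1).1
        exact L_mono (by omega) this
      · have := L_shift u' (hq s2 hs2).1
        exact L_mono (by omega) this
    have hπdeg : (monomial u (1:K) * q s1 - monomial u' 1 * q s2).totalDegree ≤ D - 2 := by
      have hid : monomial u (1:K) * q s1 - monomial u' 1 * q s2
          = monomial u' (1:K) * (monomial s2 1 - q s2)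
            - monomial u 1 * (monomial s1 1 - q s1) := by
        rw [mul_sub, mul_sub, monomial_mul, monomial_mul, one_mul, huu]
        ring
      rw [hid]
      refine (totalDegree_sub_le _ _).trans (max_le ?_ ?_)
      · refine (totalDegree_mul _ _).trans ?_
        have h1 : (monomial u' (1:K)).totalDegree ≤ mdeg u' :=
          (totalDegree_monomial_le _ _)
        have h2 := qdiff_deg hq hs2
        omega
      · refine (totalDegree_mul _ _).trans ?_
        have h1 : (monomial u (1:K)).totalDegree ≤ mdeg u :=
          (totalDegree_monomial_le _ _)
        have h2 := qdiff_deg hq hs1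
        omega
    exact step _ hπL hπdeg j
  -- generators of `L F D` are handled by `step` and `commute_lemma`
  have hgen : ∀ y ∈ Lset F D, y - psiq sq q (homogeneousComponent D y) ∈
      SS F d e ⊔ L F (D - 1) := by
    rintro y ⟨f, hfF, t, rfl, hydeg⟩
    by_cases hcase : (monomial t (1:K) * f).totalDegree = D
    · -- top-degree generator
      have hf0 : f ≠ 0 := by
        intro h
        rw [h, mul_zero, totalDegree_zero] at hcase
        omega
      have hdeq : mdeg t + f.totalDegree = D := by
        rw [← totalDegree_monomial_one_mul t f hf0, hcase]
      have hdf : f.totalDegree ≤ e := le_trans (Finset.le_sup hfF) he2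
      have ht1 : 1 ≤ mdeg t := by omega
      have ht0 : t ≠ 0 := by
        intro h; rw [h, mdeg_zero] at ht1; omega
      obtain ⟨j, hj⟩ := Finsupp.support_nonempty_iff.2 ht0
      have hjt : Finsupp.single j 1 ≤ t :=
        Finsupp.single_le_iff.mpr (Nat.one_le_iff_ne_zero.2 (Finsupp.mem_support_iff.mp hj))
      have htt' : Finsupp.single j 1 + (t - Finsupp.single j 1) = t :=
        add_tsub_cancel_of_le hjt
      have hmdt' : mdeg (t - Finsupp.single j 1) = mdeg t - 1 := by
        rw [mdeg_tsub hjt, mdeg_single]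
      -- the top part
      have hcompD : homogeneousComponent D (monomial t (1:K) * f)
          = monomial t 1 * topPart f := by
        rw [homogeneousComponent_monomial_mul f D (by omega)]
        have harith : D - mdeg t = f.totalDegree := by omega
        rw [harith, topPart]
      set P := monomial (t - Finsupp.single j 1) (1:K) * topPart f with hP
      have hPhom : P.IsHomogeneous (D - 1) := by
        have h1 : P.IsHomogeneous (mdeg (t - Finsupp.single j 1) + f.totalDegree) :=
          IsHomogeneous.mul (isHomogeneous_monomial (1:K) (mdeg_degree _).symm)
            (topPart_isHomogeneous f)
        have h2 : mdeg (t - Finsupp.single j 1) + f.totalDegree = D - 1 := by omega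
        rwa [h2] at h1
      have hPsupp : ∀ M ∈ P.support, mdeg M = D - 1 := fun M hM =>
        isHomogeneous_coeff hPhom hM
      have hyP : monomial t (1:K) * f
          = monomial (Finsupp.single j 1) 1 * (monomial (t - Finsupp.single j 1) 1 * f) := by
        rw [← mul_assoc, monomial_mul, one_mul, htt']
      have hcompP : monomial t (1:K) * topPart f = monomial (Finsupp.single j 1) 1 * P := by
        rw [hP, ← mul_assoc, monomial_mul, one_mul, htt']
      set w := monomial (t - Finsupp.single j 1) (1:K) * f - psiq sq q P with hw
      have hwL : w ∈ L F (D-1) := by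
        refine Submodule.sub_mem _ ?_ ?_
        · apply Submodule.subset_span
          refine ⟨f, hfF, t - Finsupp.single j 1, rfl, ?_⟩
          rw [totalDegree_monomial_one_mul _ f hf0]
          omega
        · apply psiq_mem_L hq hsq
          intro M hM
          have := hPsupp M hM
          omega
      have hwdeg : w.totalDegree ≤ D - 2 := by
        have hid : w = monomial (t - Finsupp.single j 1) (1:K) * (f - topPart f)
            + (P - psiq sq q P) := by
          rw [hw, hP, mul_sub]
          ring
        rw [hid]
        refine (totalDegree_add _ _).trans (max_le ?_ ?_)
        · rcases eq_or_ne f.totalDegree 0 with hfd | hfd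
          · rw [topPart_eq_self_of_deg_zero hfd, mul_zero, totalDegree_zero]
            omega
          · refine (totalDegree_mul _ _).trans ?_
            have h1 : (monomial (t - Finsupp.single j 1) (1:K)).totalDegree
                ≤ mdeg (t - Finsupp.single j 1) := totalDegree_monomial_le _ _
            have h2 := sub_topPart_degree f
            omega
        · have := psiq_diff_deg hq hsq hd1 (c := D - 1) (by omega) hPsupp
          omega
      have hΘid : monomial t (1:K) * f
            - psiq sq q (homogeneousComponent D (monomial t (1:K) * f))
          = monomial (Finsupp.single j 1) (1:K) * w
            + (monomial (Finsupp.single j 1) (1:K) * psiq sq q P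
              - psiq sq q (monomial (Finsupp.single j 1) 1 * P)) := by
        rw [hcompD, hcompP, hw, hyP]
        ring
      rw [hΘid]
      refine Submodule.add_mem _ (step w hwL hwdeg j) ?_
      refine pairs ?_
      exact commute_lemma sq q d (by omega) hsq j hPsupp
    · -- low-degree generator
      have hlow : (monomial t (1:K) * f).totalDegree ≤ D - 1 := by
        have : (monomial t (1:K) * f).totalDegree ≤ D := hydeg
        omega
      have hcomp0 : homogeneousComponent D (monomial t (1:K) * f) = 0 :=
        homogeneousComponent_eq_zero _ _ (by omega)
      rw [hcomp0, psiq_zero, sub_zero]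
      exact Submodule.mem_sup_right (Submodule.subset_span ⟨f, hfF, t, rfl, hlow⟩)
  -- conclude by linearity
  have hΘle : L F D ≤ Submodule.comap
      ((LinearMap.id : MvPolynomial (Fin n) K →ₗ[K] MvPolynomial (Fin n) K)
        - (psiqL sq q) ∘ₗ (homogeneousComponent D)) (SS F d e ⊔ L F (D - 1)) := by
    rw [L, Submodule.span_le]
    intro y hy
    simp only [SetLike.mem_coe, Submodule.mem_comap, LinearMap.sub_apply, LinearMap.id_apply,
      LinearMap.comp_apply]
    rw [psiqL_apply]
    exact hgen y hy
  have h2 := hΘle hpL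
  simp only [Submodule.mem_comap, LinearMap.sub_apply, LinearMap.id_apply,
    LinearMap.comp_apply] at h2
  have hcp : homogeneousComponent D p = 0 := homogeneousComponent_eq_zero _ _ (by omega)
  rwa [hcp, map_zero, sub_zero] at h2

end FallSec
section MainSec
variable {F : Finset (MvPolynomial (Fin n) K)} {d e : ℕ}
variable {sq : (Fin n →₀ ℕ) → (Fin n →₀ ℕ)} {q : (Fin n →₀ ℕ) → MvPolynomial (Fin n) K}

lemma L_exists {f : MvPolynomial (Fin n) K}
    (hf : f ∈ Ideal.span (F : Set (MvPolynomial (Fin n) K))) : ∃ D, f ∈ L F D := by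
  induction hf using Submodule.span_induction with
  | mem x h => exact ⟨x.totalDegree, L_memF h⟩
  | zero => exact ⟨0, Submodule.zero_mem _⟩
  | add x y _ _ hx hy =>
    obtain ⟨D1, h1⟩ := hx
    obtain ⟨D2, h2⟩ := hy
    exact ⟨max D1 D2, Submodule.add_mem _ (L_mono (le_max_left _ _) h1)
      (L_mono (le_max_right _ _) h2)⟩
  | smul r x _ hx =>
    obtain ⟨D1, h1⟩ := hx
    refine ⟨r.totalDegree + D1, ?_⟩
    rw [smul_eq_mul]
    exact L_mul r h1

lemma main_lemma (hreg : regAt F d) (hd1 : 1 ≤ d) (he1 : d + 1 ≤ e)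
    (he2 : F.sup totalDegree ≤ e)
    (hsq : ∀ M : Fin n →₀ ℕ, d ≤ mdeg M → sq M ≤ M ∧ mdeg (sq M) = d)
    (hq : ∀ s, mdeg s = d → q s ∈ L F d ∧ (q s).totalDegree ≤ d ∧
      homogeneousComponent d (q s) = monomial s 1) :
    ∀ D (z : MvPolynomial (Fin n) K), z ∈ L F D → z.totalDegree ≤ d → z ∈ V F e := by
  intro D
  induction D using Nat.strong_induction_on with
  | _ D IH =>
  intro z hz hzd
  rcases le_or_gt D e with hDe | hDe
  · exact L_le_V e (L_mono hDe hz)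
  · have hfall := fall hreg hd1 he1 he2 hsq hq D (by omega) z hz (by omega)
    rw [Submodule.mem_sup] at hfall
    obtain ⟨v, hv, l, hl, hvl⟩ := hfall
    rw [mem_SS] at hv
    have hld : l.totalDegree ≤ d := by
      have hlzv : l = z - v := by rw [← hvl]; ring
      rw [hlzv]
      exact (totalDegree_sub_le _ _).trans (max_le hzd hv.2.2)
    have hlV := IH (D-1) (by omega) l hl hld
    rw [← hvl]
    exact Submodule.add_mem _ hv.1 hlV

end MainSec
end Stmt10Aux

open Stmt10Aux in
/-- Corollary 3.10: the last fall degree of `F` is at most `max{d_reg(F) + 1, max deg fᵢ}`: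
every element `f` of the ideal `(F)` lies in `V_{F, max{t, deg f}}` for that `t`. -/
theorem stmt10 {n : ℕ} {K : Type*} [Field K] (F : Finset (MvPolynomial (Fin n) K)) (d : ℕ)
    (hreg : IsLeast {e | regAt F e} d) :
    ∀ f ∈ Ideal.span (F : Set (MvPolynomial (Fin n) K)),
      f ∈ V F (max (max (d + 1) (F.sup MvPolynomial.totalDegree)) f.totalDegree) := by
  intro f hf
  by_cases hd0 : d = 0
  · -- degenerate case : the ideal contains 1
    subst hd0
    have hreg0 : regAt F 0 := hreg.1
    obtain ⟨l, hlL, hlc⟩ := rewrite_lemma hreg0 le_rfl (isHomogeneous_one (Fin n) K)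
    have hld : l.totalDegree = 0 := Nat.le_zero.mp (L_deg_le hlL)
    have hl1 : l = 1 := by
      have h1 : l.IsHomogeneous l.totalDegree := by
        rw [hld]
        exact isHomogeneous_of_totalDegree_zero _ hld
      have h2 := homogeneousComponent_of_mem (m := l.totalDegree)
        ((mem_homogeneousSubmodule _ _).mpr h1)
      rw [if_pos rfl] at h2
      rw [hld] at h2
      rw [h2] at hlc
      exact hlc
    have hone : (1 : MvPolynomial (Fin n) K) ∈ L F 0 := hl1 ▸ hlL
    have hfL : f ∈ L F f.totalDegree := by
      have hsum : ∑ M ∈ f.support, monomial M (coeff M f) ∈ L F f.totalDegree := by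
        apply Submodule.sum_mem
        intro M hM
        have h1 : monomial M (coeff M f) = coeff M f • (monomial M (1:K) * 1) := by
          rw [mul_one, smul_monomial, smul_eq_mul, mul_one]
        rw [h1]
        apply Submodule.smul_mem
        have h2 := L_shift M hone
        refine L_mono ?_ h2
        have h3 := le_totalDegree hM
        change mdeg M ≤ _ at h3
        omega
      rwa [← MvPolynomial.as_sum f] at hsum
    exact L_le_V _ (L_mono (le_max_right _ _) hfL)
  · -- main case
    have hd1 : 1 ≤ d := Nat.one_le_iff_ne_zero.2 hd0
    have he1 : d + 1 ≤ max (d+1) (F.sup MvPolynomial.totalDegree) := le_max_left _ _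
    have he2 : F.sup MvPolynomial.totalDegree ≤ max (d+1) (F.sup MvPolynomial.totalDegree) :=
      le_max_right _ _
    -- construct sq
    have hsqex : ∀ M : Fin n →₀ ℕ, ∃ s, d ≤ mdeg M → s ≤ M ∧ mdeg s = d := by
      intro M
      by_cases h : d ≤ mdeg M
      · obtain ⟨s, h1, h2⟩ := exists_sub (mdeg M) M rfl d h
        exact ⟨s, fun _ => ⟨h1, h2⟩⟩
      · exact ⟨0, fun hh => absurd hh h⟩
    choose sq hsq using hsqex
    -- construct q
    have hqex : ∀ s : Fin n →₀ ℕ, ∃ qs, mdeg s = d →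
        qs ∈ L F d ∧ qs.totalDegree ≤ d ∧ homogeneousComponent d qs = monomial s 1 := by
      intro s
      by_cases h : mdeg s = d
      · obtain ⟨l, h1, h2⟩ := rewrite_lemma hreg.1 le_rfl
          (isHomogeneous_monomial (1:K) (by rw [← mdeg_degree, h]))
        exact ⟨l, fun _ => ⟨h1, L_deg_le h1, h2⟩⟩
      · exact ⟨0, fun hh => absurd hh h⟩
    choose q hq using hqex
    -- decompose f
    obtain ⟨l, z, hlz, hlL, hzI, hzd⟩ := topred hreg.1 hd1 f.totalDegree f le_rfl hf
    have hlV : l ∈ V F (max (max (d + 1) (F.sup MvPolynomial.totalDegree)) f.totalDegree) := by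
      refine L_le_V _ (L_mono ?_ hlL)
      apply max_le
      · omega
      · exact le_max_right _ _
    obtain ⟨D, hzL⟩ := L_exists hzI
    have hzV : z ∈ V F (max (d+1) (F.sup MvPolynomial.totalDegree)) :=
      main_lemma hreg.1 hd1 he1 he2 (fun M h => hsq M h) (fun s hs => hq s hs) D z hzL (by omega)
    nth_rewrite 2 [hlz]
    exact Submodule.add_mem _ hlV (V_mono (le_max_left _ _) hzV)
end
end

section
/- Let F = {x^k + y, y^k + x, xy} ⊆ K[x,y] with k > 1. Then y^2 ∈ V_{F,k+1}, via y^2 = y(x^k + y) − x^{k-1}(xy), and consequently x = (y^k + x) − y^{k-2}·y^2 ∈ V_{F,k+1} and y ∈ V_{F,k+1}. -/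
open MvPolynomial

noncomputable section

lemma mem_V_of_mem {n : ℕ} {K : Type*} [Field K] {F : Finset (MvPolynomial (Fin n) K)}
    {d : ℕ} {f : MvPolynomial (Fin n) K} (hf : f ∈ F) (hd : f.totalDegree ≤ d) :
    f ∈ V F d :=
  Submodule.mem_sInf.2 fun _ hW => hW.1 f hf hd

lemma mul_mem_V {n : ℕ} {K : Type*} [Field K] {F : Finset (MvPolynomial (Fin n) K)}
    {d : ℕ} (s : Fin n →₀ ℕ) {f : MvPolynomial (Fin n) K} (hf : f ∈ V F d)
    (hd : (monomial s (1 : K) * f).totalDegree ≤ d) :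
    monomial s (1 : K) * f ∈ V F d :=
  Submodule.mem_sInf.2 fun W hW => hW.2 s f (Submodule.mem_sInf.1 hf W hW) hd

/-- For `F = {x^k + y, y^k + x, xy}` with `k > 1`:
`y² = y(x^k + y) − x^{k-1}(xy) ∈ V_{F,k+1}`, and consequently
`x = (y^k + x) − y^{k-2}·y² ∈ V_{F,k+1}` and `y ∈ V_{F,k+1}`. -/
theorem stmt16 (K : Type*) [Field K] [DecidableEq K] (k : ℕ) (hk : 1 < k) :
    ((X 1 : MvPolynomial (Fin 2) K) ^ 2 =
        X 1 * ((X 0) ^ k + X 1) - (X 0) ^ (k - 1) * (X 0 * X 1)) ∧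
      (X 1 : MvPolynomial (Fin 2) K) ^ 2 ∈
        V ({(X 0) ^ k + X 1, (X 1) ^ k + X 0, X 0 * X 1} :
          Finset (MvPolynomial (Fin 2) K)) (k + 1) ∧
      ((X 0 : MvPolynomial (Fin 2) K) =
        ((X 1) ^ k + X 0) - (X 1) ^ (k - 2) * (X 1) ^ 2) ∧
      (X 0 : MvPolynomial (Fin 2) K) ∈
        V ({(X 0) ^ k + X 1, (X 1) ^ k + X 0, X 0 * X 1} :
          Finset (MvPolynomial (Fin 2) K)) (k + 1) ∧
      (X 1 : MvPolynomial (Fin 2) K) ∈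
        V ({(X 0) ^ k + X 1, (X 1) ^ k + X 0, X 0 * X 1} :
          Finset (MvPolynomial (Fin 2) K)) (k + 1) := by
  obtain ⟨m, rfl⟩ : ∃ m, k = m + 2 := ⟨k - 2, by omega⟩
  have hk1 : m + 2 - 1 = m + 1 := by omega
  have hk2 : m + 2 - 2 = m := by omega
  set F : Finset (MvPolynomial (Fin 2) K) :=
    {(X 0) ^ (m + 2) + X 1, (X 1) ^ (m + 2) + X 0, X 0 * X 1} with hF
  have hg1 : ((X 0 : MvPolynomial (Fin 2) K) ^ (m + 2) + X 1) ∈ V F (m + 2 + 1) := by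
    refine mem_V_of_mem (by simp [hF]) ?_
    refine (totalDegree_add _ _).trans ?_
    simp [totalDegree_X_pow, totalDegree_X]
  have hg2 : ((X 1 : MvPolynomial (Fin 2) K) ^ (m + 2) + X 0) ∈ V F (m + 2 + 1) := by
    refine mem_V_of_mem (by simp [hF]) ?_
    refine (totalDegree_add _ _).trans ?_
    simp [totalDegree_X_pow, totalDegree_X]
  have hg3 : ((X 0 : MvPolynomial (Fin 2) K) * X 1) ∈ V F (m + 2 + 1) := by
    refine mem_V_of_mem (by simp [hF]) ?_
    refine (totalDegree_mul _ _).trans ?_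
    simp [totalDegree_X]
  have hmono : ∀ (i : Fin 2) (e : ℕ), (monomial (Finsupp.single i e) (1 : K) :
      MvPolynomial (Fin 2) K) = X i ^ e := fun i e => (X_pow_eq_monomial (n := i) (e := e)).symm
  have hdm : ∀ (i : Fin 2) (e : ℕ) (f : MvPolynomial (Fin 2) K),
      ((X i : MvPolynomial (Fin 2) K) ^ e * f).totalDegree ≤ e + f.totalDegree := by
    intro i e f
    refine (totalDegree_mul _ _).trans ?_
    simp [totalDegree_X_pow]
  have ht1 : (X 1 : MvPolynomial (Fin 2) K) * ((X 0) ^ (m + 2) + X 1) ∈ V F (m + 2 + 1) := by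
    have hdeg : ((monomial (Finsupp.single 1 1) (1 : K)) *
        ((X 0 : MvPolynomial (Fin 2) K) ^ (m + 2) + X 1)).totalDegree ≤ m + 2 + 1 := by
      rw [hmono, pow_one]
      have hA : (X 1 : MvPolynomial (Fin 2) K).totalDegree ≤ 1 := by
        simp [totalDegree_X]
      have hB : ((X 0 : MvPolynomial (Fin 2) K) ^ (m + 2) + X 1).totalDegree ≤ m + 2 := by
        refine (totalDegree_add _ _).trans ?_
        simp [totalDegree_X_pow, totalDegree_X]
      have := totalDegree_mul (X 1 : MvPolynomial (Fin 2) K) ((X 0) ^ (m + 2) + X 1)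
      omega
    have := mul_mem_V (Finsupp.single 1 1) hg1 hdeg
    rwa [hmono, pow_one] at this
  have ht2 : (X 0 : MvPolynomial (Fin 2) K) ^ (m + 1) * (X 0 * X 1) ∈ V F (m + 2 + 1) := by
    have hdeg : ((monomial (Finsupp.single 0 (m + 1)) (1 : K)) *
        ((X 0 : MvPolynomial (Fin 2) K) * X 1)).totalDegree ≤ m + 2 + 1 := by
      rw [hmono]
      refine (hdm _ _ _).trans ?_
      have h2 : ((X 0 : MvPolynomial (Fin 2) K) * X 1).totalDegree ≤ 2 := by
        refine (totalDegree_mul _ _).trans ?_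
        simp [totalDegree_X]
      omega
    have := mul_mem_V (Finsupp.single 0 (m + 1)) hg3 hdeg
    rwa [hmono] at this
  have hy2eq : (X 1 : MvPolynomial (Fin 2) K) ^ 2 =
      X 1 * ((X 0) ^ (m + 2) + X 1) - (X 0) ^ (m + 2 - 1) * (X 0 * X 1) := by
    rw [hk1]; ring
  have hy2 : (X 1 : MvPolynomial (Fin 2) K) ^ 2 ∈ V F (m + 2 + 1) := by
    rw [hy2eq, hk1]
    exact Submodule.sub_mem _ ht1 ht2
  have ht3 : (X 1 : MvPolynomial (Fin 2) K) ^ m * (X 1) ^ 2 ∈ V F (m + 2 + 1) := by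
    have hdeg : ((monomial (Finsupp.single 1 m) (1 : K)) *
        ((X 1 : MvPolynomial (Fin 2) K) ^ 2)).totalDegree ≤ m + 2 + 1 := by
      rw [hmono]
      refine (hdm _ _ _).trans ?_
      have h2 : ((X 1 : MvPolynomial (Fin 2) K) ^ 2).totalDegree ≤ 2 := by
        simp [totalDegree_X_pow]
      omega
    have := mul_mem_V (Finsupp.single 1 m) hy2 hdeg
    rwa [hmono] at this
  have hxeq : (X 0 : MvPolynomial (Fin 2) K) =
      ((X 1) ^ (m + 2) + X 0) - (X 1) ^ (m + 2 - 2) * (X 1) ^ 2 := by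
    rw [hk2]; ring
  have hx : (X 0 : MvPolynomial (Fin 2) K) ∈ V F (m + 2 + 1) := by
    rw [hxeq, hk2]
    exact Submodule.sub_mem _ hg2 ht3
  have ht4 : (X 0 : MvPolynomial (Fin 2) K) ^ (m + 2) ∈ V F (m + 2 + 1) := by
    have hdeg : ((monomial (Finsupp.single 0 (m + 1)) (1 : K)) *
        (X 0 : MvPolynomial (Fin 2) K)).totalDegree ≤ m + 2 + 1 := by
      rw [hmono]
      refine (hdm _ _ _).trans ?_
      simp [totalDegree_X]
    have := mul_mem_V (Finsupp.single 0 (m + 1)) hx hdeg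
    rw [hmono] at this
    have e : (X 0 : MvPolynomial (Fin 2) K) ^ (m + 1) * X 0 = X 0 ^ (m + 2) := by ring
    rwa [e] at this
  have hy : (X 1 : MvPolynomial (Fin 2) K) ∈ V F (m + 2 + 1) := by
    have e : (X 1 : MvPolynomial (Fin 2) K) = ((X 0) ^ (m + 2) + X 1) - X 0 ^ (m + 2) := by
      ring
    rw [e]
    exact Submodule.sub_mem _ hg1 ht4
  exact ⟨hy2eq, hy2, hxeq, hx, hy⟩
end
end

section
/- Let F = {x^k + y, y^k + x, xy} ⊆ K[x,y] with k > 1. Then the polynomial x does not belong to V_{F,k}, the smallest K-linear space containing F and closed under monomial multiplication within degree k. -/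
open MvPolynomial

noncomputable section

/-- Auxiliary submodule defined by coefficient conditions. -/
def Wsub (K : Type*) [Field K] (k : ℕ) : Submodule K (MvPolynomial (Fin 2) K) where
  carrier := {f | coeff 0 f = 0 ∧
    coeff (Finsupp.single 0 1) f = coeff (Finsupp.single 1 k) f ∧
    coeff (Finsupp.single 1 1) f = coeff (Finsupp.single 0 k) f ∧
    (∀ a : ℕ, 2 ≤ a → a < k → coeff (Finsupp.single 0 a) f = 0) ∧
    (∀ a : ℕ, 2 ≤ a → a < k → coeff (Finsupp.single 1 a) f = 0)}
  zero_mem' := by simp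
  add_mem' := by
    rintro a b ⟨h1, h2, h3, h4, h5⟩ ⟨g1, g2, g3, g4, g5⟩
    exact ⟨by simp [coeff_add, h1, g1], by simp [coeff_add, h2, g2],
      by simp [coeff_add, h3, g3],
      fun c hc1 hc2 => by simp [coeff_add, h4 c hc1 hc2, g4 c hc1 hc2],
      fun c hc1 hc2 => by simp [coeff_add, h5 c hc1 hc2, g5 c hc1 hc2]⟩
  smul_mem' := by
    rintro c a ⟨h1, h2, h3, h4, h5⟩
    exact ⟨by simp [coeff_smul, h1], by simp [coeff_smul, h2], by simp [coeff_smul, h3],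
      fun b hb1 hb2 => by simp [coeff_smul, h4 b hb1 hb2],
      fun b hb1 hb2 => by simp [coeff_smul, h5 b hb1 hb2]⟩

lemma sum_single_nat (i : Fin 2) (a : ℕ) :
    (Finsupp.single i a).sum (fun _ e => e) = a :=
  Finsupp.sum_single_index rfl

lemma le_single_fin2 {s : Fin 2 →₀ ℕ} {i : Fin 2} {a : ℕ}
    (h : s ≤ Finsupp.single i a) : s = Finsupp.single i (s i) ∧ s i ≤ a := by
  have hle : ∀ j, s j ≤ Finsupp.single i a j := fun j => h j
  constructor
  · ext j
    by_cases hj : j = i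
    · subst hj; simp
    · have := hle j
      simp [Finsupp.single_apply, Ne.symm hj, hj] at this ⊢
      omega
  · simpa using hle i

/-- degree kill: a coefficient of `f` must vanish if the corresponding coefficient of
`monomial s 1 * f` would force too large a degree. -/
lemma coeff_eq_zero_of_deg {K : Type*} [Field K] {k : ℕ} (s t : Fin 2 →₀ ℕ)
    (f : MvPolynomial (Fin 2) K)
    (hdeg : (monomial s (1 : K) * f).totalDegree ≤ k)
    (hsum : k < s.sum (fun _ e => e) + t.sum (fun _ e => e)) :
    coeff t f = 0 := by
  by_contra hc
  have h1 : coeff (s + t) (monomial s (1 : K) * f) ≠ 0 := by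
    rw [coeff_monomial_mul, one_mul]; exact hc
  have h2 := le_totalDegree (mem_support_iff.2 h1)
  rw [Finsupp.sum_add_index' (fun _ => rfl) (fun _ _ _ => rfl)] at h2
  omega

lemma key_zero {K : Type*} [Field K] {k : ℕ} (hk : 1 < k) (s : Fin 2 →₀ ℕ)
    (hs : s ≠ 0) (f : MvPolynomial (Fin 2) K)
    (hf : f ∈ Wsub K k)
    (hdeg : (monomial s (1 : K) * f).totalDegree ≤ k)
    (i : Fin 2) (a : ℕ) (ha : a ≤ k) :
    coeff (Finsupp.single i a) (monomial s (1 : K) * f) = 0 := by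
  obtain ⟨f1, f2, f3, f4, f5⟩ := hf
  rw [coeff_monomial_mul']
  split_ifs with h
  · obtain ⟨hseq, hsa⟩ := le_single_fin2 h
    have hb1 : 1 ≤ s i := by
      rcases Nat.eq_zero_or_pos (s i) with h0 | h0
      · exact absurd (by rw [hseq, h0, Finsupp.single_zero]) hs
      · exact h0
    have hsub : Finsupp.single i a - s = Finsupp.single i (a - s i) := by
      conv_lhs => rw [hseq]
      ext j
      by_cases hj : j = i <;> simp [Finsupp.single_apply, hj]
    rw [one_mul, hsub]
    have hsum : s.sum (fun _ e => e) = s i := by rw [hseq, sum_single_nat]; rw [hseq]; simp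
    rcases Nat.lt_or_ge (a - s i) 2 with h2 | h2
    · interval_cases h : (a - s i)
      · simpa using f1
      · have hi : i = 0 ∨ i = 1 := by fin_cases i <;> [exact Or.inl rfl; exact Or.inr rfl]
        rcases hi with rfl | rfl
        · rw [f2]
          exact coeff_eq_zero_of_deg s _ f hdeg (by rw [hsum, sum_single_nat]; omega)
        · rw [f3]
          exact coeff_eq_zero_of_deg s _ f hdeg (by rw [hsum, sum_single_nat]; omega)
    · have hlt : a - s i < k := by omega
      have hi : i = 0 ∨ i = 1 := by fin_cases i <;> [exact Or.inl rfl; exact Or.inr rfl]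
      rcases hi with rfl | rfl
      · exact f4 _ h2 hlt
      · exact f5 _ h2 hlt
  · rfl

/-- Lower-bound half of the optimality example: for `F = {x^k + y, y^k + x, xy}` with `k > 1`,
the polynomial `x` does not belong to `V_{F,k}`. -/
theorem stmt17 (K : Type*) [Field K] [DecidableEq K] (k : ℕ) (hk : 1 < k) :
    (X 0 : MvPolynomial (Fin 2) K) ∉
      V ({(X 0) ^ k + X 1, (X 1) ^ k + X 0, X 0 * X 1} :
        Finset (MvPolynomial (Fin 2) K)) k := by
  intro hx
  have hW : Wsub K k ∈ {W : Submodule K (MvPolynomial (Fin 2) K) |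
      (∀ f ∈ ({(X 0) ^ k + X 1, (X 1) ^ k + X 0, X 0 * X 1} :
        Finset (MvPolynomial (Fin 2) K)), f.totalDegree ≤ k → f ∈ W) ∧
      ∀ (s : Fin 2 →₀ ℕ), ∀ f ∈ W,
        (monomial s (1 : K) * f).totalDegree ≤ k → monomial s (1 : K) * f ∈ W} := by
    constructor
    · intro f hf _
      have hxy : (X 0 * X 1 : MvPolynomial (Fin 2) K) =
          monomial (Finsupp.single 0 1 + Finsupp.single 1 1) 1 := by
        rw [X, X, monomial_mul, one_mul]
      have hne : ∀ (i : Fin 2) (a : ℕ),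
          Finsupp.single 0 1 + Finsupp.single 1 1 ≠ Finsupp.single i a := by
        intro i a h
        have h0 := DFunLike.congr_fun h 0
        have h1 := DFunLike.congr_fun h 1
        have hi : i = 0 ∨ i = 1 := by fin_cases i <;> [exact Or.inl rfl; exact Or.inr rfl]
        rcases hi with rfl | rfl <;> simp [Finsupp.single_apply] at h0 h1
      have hne0 : Finsupp.single (0 : Fin 2) 1 + Finsupp.single 1 1 ≠ 0 := by
        intro h
        have h0 := DFunLike.congr_fun h 0
        simp [Finsupp.single_apply] at h0
      simp only [Finset.mem_insert, Finset.mem_singleton] at hf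
      rcases hf with rfl | rfl | rfl
      · refine ⟨?_, ?_, ?_, fun a ha1 ha2 => ?_, fun a ha1 ha2 => ?_⟩ <;>
          simp [coeff_add, coeff_X_pow, coeff_X', Finsupp.single_eq_single_iff,
            Finsupp.single_eq_zero] <;> first | omega | (split_ifs <;> first | omega | simp)
      · refine ⟨?_, ?_, ?_, fun a ha1 ha2 => ?_, fun a ha1 ha2 => ?_⟩ <;>
          simp [coeff_add, coeff_X_pow, coeff_X', Finsupp.single_eq_single_iff,
            Finsupp.single_eq_zero] <;> first | omega | (split_ifs <;> first | omega | simp)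
      · refine ⟨?_, ?_, ?_, fun a ha1 ha2 => ?_, fun a ha1 ha2 => ?_⟩ <;>
          rw [hxy] <;> simp [coeff_monomial, hne, hne0]
    · intro s f hf hdeg
      by_cases hs : s = 0
      · subst hs
        simpa [monomial_zero'] using hf
      · refine ⟨?_, ?_, ?_, fun a ha1 ha2 => ?_, fun a ha1 ha2 => ?_⟩
        · have := key_zero hk s hs f hf hdeg 0 0 (by omega)
          simpa using this
        · rw [key_zero hk s hs f hf hdeg 0 1 (by omega),
            key_zero hk s hs f hf hdeg 1 k le_rfl]
        · rw [key_zero hk s hs f hf hdeg 1 1 (by omega),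
            key_zero hk s hs f hf hdeg 0 k le_rfl]
        · exact key_zero hk s hs f hf hdeg 0 a (by omega)
        · exact key_zero hk s hs f hf hdeg 1 a (by omega)
  have hxW : (X 0 : MvPolynomial (Fin 2) K) ∈ Wsub K k := (sInf_le hW) hx
  obtain ⟨-, h2, -⟩ := hxW
  rw [coeff_X', coeff_X'] at h2
  simp [Finsupp.single_eq_single_iff] at h2
end
end
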